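/- arXiv:2109.07952 — 4 statements merged into one kernel-verified Lean document; each statement's English description precedes it below -/
import Mathlib

section
/- ∫_ℝ (log(1+x²))² / (1+x²) dx = π³/3 + 4π (log 2)². -/
open Real MeasureTheory Set intervalIntegral

-- |log t| ≤ 2 t^(-1/2) for 0 < t ≤ 1
lemma abs_log_le (t : ℝ) (h0 : 0 < t) (h1 : t ≤ 1) : |Real.log t| ≤ 2 * t ^ (-(1/2) : ℝ) := by
  have hs : 0 ≤ -Real.log t := by
    simpa using Real.log_nonpos h0.le h1
  have habs : |Real.log t| = -Real.log t := abs_of_nonpos (by linarith)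
  have hrp : t ^ (-(1/2) : ℝ) = Real.exp (-Real.log t / 2) := by
    rw [Real.rpow_def_of_pos h0]
    ring_nf
  have hexp : -Real.log t / 2 ≤ Real.exp (-Real.log t / 2) := by
    have := Real.add_one_le_exp (-Real.log t / 2)
    linarith
  rw [habs, hrp]; linarith

-- (log t)^2 ≤ 16 t^(-1/2)
lemma sq_log_le (t : ℝ) (h0 : 0 < t) (h1 : t ≤ 1) : (Real.log t) ^ 2 ≤ 16 * t ^ (-(1/2) : ℝ) := by
  set s : ℝ := -Real.log t with hsdef
  have hs : 0 ≤ s := by simpa [hsdef] using Real.log_nonpos h0.le h1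
  have hrp : t ^ (-(1/2) : ℝ) = Real.exp (s / 2) := by
    rw [Real.rpow_def_of_pos h0, hsdef]
    ring_nf
  have h4 : s / 4 ≤ Real.exp (s / 4) := by
    have := Real.add_one_le_exp (s / 4); linarith
  have hsq : (s / 4) ^ 2 ≤ Real.exp (s / 4) ^ 2 := by
    have h0' : 0 ≤ s / 4 := by linarith
    exact pow_le_pow_left₀ h0' h4 2
  have hee : Real.exp (s / 4) ^ 2 = Real.exp (s / 2) := by
    rw [← Real.exp_nat_mul]; ring_nf
  have : (Real.log t) ^ 2 = s ^ 2 := by rw [hsdef]; ring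
  rw [this, hrp]
  nlinarith [hsq, hee]

lemma II_sin_aux {f : ℝ → ℝ} (hm : Measurable f) {C : ℝ} (hC : 0 ≤ C)
    (hb : ∀ t : ℝ, 0 < t → t ≤ 1 → |f t| ≤ C * t ^ (-(1/2) : ℝ)) :
    IntervalIntegrable (fun x => f (Real.sin x)) volume 0 (π/2) := by
  have hK : 0 ≤ C * (2/π) ^ (-(1/2) : ℝ) := by positivity
  have hint : IntervalIntegrable (fun x : ℝ => C * (2/π) ^ (-(1/2) : ℝ) * x ^ (-(1/2) : ℝ))
      volume 0 (π/2) :=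
    (intervalIntegral.intervalIntegrable_rpow' (by norm_num)).const_mul _
  refine hint.mono_fun ((hm.comp Real.continuous_sin.measurable).aestronglyMeasurable) ?_
  have huIoc : Set.uIoc (0:ℝ) (π/2) = Set.Ioc 0 (π/2) := Set.uIoc_of_le (by positivity)
  rw [huIoc]
  filter_upwards [ae_restrict_mem measurableSet_Ioc] with x hx
  have hx0 : 0 < x := hx.1
  have hxp : x ≤ π / 2 := hx.2
  have hsin0 : 0 < Real.sin x := Real.sin_pos_of_pos_of_lt_pi hx0 (by linarith [Real.pi_pos])
  have hsin1 : Real.sin x ≤ 1 := Real.sin_le_one x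
  have hjordan : 2 / π * x ≤ Real.sin x := Real.mul_le_sin hx0.le hxp
  have h2pix : 0 < 2 / π * x := by positivity
  have h1 : |f (Real.sin x)| ≤ C * (Real.sin x) ^ (-(1/2) : ℝ) := hb _ hsin0 hsin1
  have h2 : (Real.sin x) ^ (-(1/2) : ℝ) ≤ (2 / π * x) ^ (-(1/2) : ℝ) :=
    Real.rpow_le_rpow_of_nonpos h2pix hjordan (by norm_num)
  have h3 : (2 / π * x) ^ (-(1/2) : ℝ) = (2/π) ^ (-(1/2) : ℝ) * x ^ (-(1/2) : ℝ) :=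
    Real.mul_rpow (by positivity) hx0.le
  have hrpx : (0:ℝ) ≤ x ^ (-(1/2) : ℝ) := Real.rpow_nonneg hx0.le _
  simp only [Real.norm_eq_abs]
  have hnn : (0:ℝ) ≤ C * (2/π) ^ (-(1/2) : ℝ) * x ^ (-(1/2) : ℝ) := mul_nonneg hK hrpx
  rw [abs_of_nonneg hnn]
  calc |f (Real.sin x)| ≤ C * (Real.sin x) ^ (-(1/2) : ℝ) := h1
    _ ≤ C * ((2/π) ^ (-(1/2) : ℝ) * x ^ (-(1/2) : ℝ)) := by
        rw [← h3]; exact mul_le_mul_of_nonneg_left h2 hC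
    _ = C * (2/π) ^ (-(1/2) : ℝ) * x ^ (-(1/2) : ℝ) := by ring

lemma II_logsin : IntervalIntegrable (fun x => Real.log (Real.sin x)) volume 0 (π/2) := by
  apply II_sin_aux (C := 2) Real.measurable_log (by norm_num)
  exact fun t h0 h1 => abs_log_le t h0 h1

lemma II_logsin_sq : IntervalIntegrable (fun x => (Real.log (Real.sin x))^2) volume 0 (π/2) := by
  apply II_sin_aux (C := 16) (Real.measurable_log.pow_const 2) (by norm_num)
  intro t h0 h1
  rw [abs_of_nonneg (sq_nonneg _)]; exact sq_log_le t h0 h1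

lemma II_logcos : IntervalIntegrable (fun x => Real.log (Real.cos x)) volume 0 (π/2) := by
  have h := (II_logsin.comp_sub_left (π/2)).symm
  simp only [sub_zero, sub_self] at h
  have : (fun x => Real.log (Real.sin (π/2 - x))) = fun x => Real.log (Real.cos x) := by
    funext x; rw [Real.sin_pi_div_two_sub]
  rwa [this] at h

lemma II_logcos_sq : IntervalIntegrable (fun x => (Real.log (Real.cos x))^2) volume 0 (π/2) := by
  have h := (II_logsin_sq.comp_sub_left (π/2)).symm
  simp only [sub_zero, sub_self] at h
  have : (fun x => (Real.log (Real.sin (π/2 - x)))^2) = fun x => (Real.log (Real.cos x))^2 := by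
    funext x; rw [Real.sin_pi_div_two_sub]
  rwa [this] at h

lemma II_logsin_pi : IntervalIntegrable (fun x => Real.log (Real.sin x)) volume 0 π := by
  apply II_logsin.trans
  have h := (II_logsin.comp_sub_left π).symm
  simp only [sub_zero, sub_self] at h
  have he : (fun x => Real.log (Real.sin (π - x))) = fun x => Real.log (Real.sin x) := by
    funext x; rw [Real.sin_pi_sub]
  rw [he] at h
  have : (π - π/2 : ℝ) = π/2 := by ring
  rwa [this] at h

lemma II_logsin_sq_pi : IntervalIntegrable (fun x => (Real.log (Real.sin x))^2) volume 0 π := by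
  apply II_logsin_sq.trans
  have h := (II_logsin_sq.comp_sub_left π).symm
  simp only [sub_zero, sub_self] at h
  have he : (fun x => (Real.log (Real.sin (π - x)))^2) = fun x => (Real.log (Real.sin x))^2 := by
    funext x; rw [Real.sin_pi_sub]
  rw [he] at h
  have : (π - π/2 : ℝ) = π/2 := by ring
  rwa [this] at h

lemma II_prod : IntervalIntegrable
    (fun x => Real.log (Real.sin x) * Real.log (Real.cos x)) volume 0 (π/2) := by
  refine (II_logsin_sq.add II_logcos_sq).mono_fun ?_ ?_
  · exact ((Real.measurable_log.comp Real.continuous_sin.measurable).mul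
      (Real.measurable_log.comp Real.continuous_cos.measurable)).aestronglyMeasurable
  · filter_upwards with x
    simp only [Real.norm_eq_abs]
    have h1 : |Real.log (Real.sin x) * Real.log (Real.cos x)|
        ≤ (Real.log (Real.sin x))^2 + (Real.log (Real.cos x))^2 := by
      rw [abs_mul]
      nlinarith [sq_nonneg (|Real.log (Real.sin x)| - |Real.log (Real.cos x)|),
        abs_nonneg (Real.log (Real.sin x)), abs_nonneg (Real.log (Real.cos x)),
        sq_abs (Real.log (Real.sin x)), sq_abs (Real.log (Real.cos x))]
    calc |Real.log (Real.sin x) * Real.log (Real.cos x)|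
        ≤ (Real.log (Real.sin x))^2 + (Real.log (Real.cos x))^2 := h1
      _ ≤ |(Real.log (Real.sin x))^2 + (Real.log (Real.cos x))^2| := le_abs_self _

lemma reflect_integral (f : ℝ → ℝ) :
    ∫ x in (0:ℝ)..(π/2), f (Real.cos x) = ∫ x in (0:ℝ)..(π/2), f (Real.sin x) := by
  have h := intervalIntegral.integral_comp_sub_left (a := (0:ℝ)) (b := π/2)
    (fun x => f (Real.sin x)) (π/2)
  simp only [sub_zero, sub_self] at h
  have he : ∀ x : ℝ, f (Real.sin (π/2 - x)) = f (Real.cos x) := by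
    intro x; rw [Real.sin_pi_div_two_sub]
  calc ∫ x in (0:ℝ)..(π/2), f (Real.cos x)
      = ∫ x in (0:ℝ)..(π/2), f (Real.sin (π/2 - x)) := by
        simp only [he]
    _ = ∫ x in (0:ℝ)..(π/2), f (Real.sin x) := by
        rw [h, intervalIntegral.integral_symm]

lemma second_half (f : ℝ → ℝ) :
    ∫ x in (π/2:ℝ)..π, f (Real.sin x) = ∫ x in (0:ℝ)..(π/2), f (Real.sin x) := by
  have h := intervalIntegral.integral_comp_sub_left (a := (0:ℝ)) (b := π/2)
    (fun x => f (Real.sin x)) π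
  simp only [sub_zero] at h
  have hpp : (π - π/2 : ℝ) = π/2 := by ring
  rw [hpp] at h
  have he : ∀ x : ℝ, f (Real.sin (π - x)) = f (Real.sin x) := by
    intro x; rw [Real.sin_pi_sub]
  simp only [he] at h
  rw [← h, intervalIntegral.integral_symm]

lemma double_integral (f : ℝ → ℝ)
    (h : IntervalIntegrable (fun x => f (Real.sin x)) volume 0 (π/2)) :
    ∫ x in (0:ℝ)..(π/2), f (Real.sin (2*x)) = ∫ x in (0:ℝ)..(π/2), f (Real.sin x) := by
  have h2 : IntervalIntegrable (fun x => f (Real.sin x)) volume (π/2) π := by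
    have hc := (h.comp_sub_left π).symm
    simp only [sub_zero, sub_self] at hc
    have he : (fun x => f (Real.sin (π - x))) = fun x => f (Real.sin x) := by
      funext x; rw [Real.sin_pi_sub]
    rw [he] at hc
    have hpp : (π - π/2 : ℝ) = π/2 := by ring
    rwa [hpp] at hc
  have hsplit : (∫ x in (0:ℝ)..π, f (Real.sin x))
      = (∫ x in (0:ℝ)..(π/2), f (Real.sin x)) + ∫ x in (π/2:ℝ)..π, f (Real.sin x) :=
    (intervalIntegral.integral_add_adjacent_intervals h h2).symm
  have hmul := intervalIntegral.integral_comp_mul_left (a := (0:ℝ)) (b := π/2)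
    (f := fun x => f (Real.sin x)) (c := 2) (by norm_num)
  simp only [mul_zero] at hmul
  have h2pi : (2 * (π/2) : ℝ) = π := by ring
  rw [h2pi] at hmul
  rw [hmul, hsplit, second_half]
  simp only [smul_eq_mul]
  ring

lemma ae_ne_pi_div_two : ∀ᵐ x : ℝ, x ≠ π/2 := by
  have : ({π/2} : Set ℝ)ᶜ ∈ (MeasureTheory.ae (volume : Measure ℝ)) := by
    rw [MeasureTheory.mem_ae_iff, compl_compl]
    exact Real.volume_singleton
  filter_upwards [this] with x hx
  simpa using hx

lemma sin_cos_log_identity {x : ℝ} (hx1 : 0 < x) (hx2 : x < π/2) :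
    Real.log (Real.sin x) + Real.log (Real.cos x) = Real.log (Real.sin (2*x)) - Real.log 2 := by
  have hs : 0 < Real.sin x := Real.sin_pos_of_pos_of_lt_pi hx1 (by linarith [Real.pi_pos])
  have hc : 0 < Real.cos x := Real.cos_pos_of_mem_Ioo ⟨by linarith [Real.pi_pos], hx2⟩
  have h2 : Real.sin (2*x) = 2 * (Real.sin x * Real.cos x) := by
    rw [Real.sin_two_mul]; ring
  rw [h2, Real.log_mul (by norm_num) (by positivity), Real.log_mul hs.ne' hc.ne']
  ring

lemma logsin_integral : ∫ x in (0:ℝ)..(π/2), Real.log (Real.sin x) = -(π/2) * Real.log 2 := by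
  set L := ∫ x in (0:ℝ)..(π/2), Real.log (Real.sin x) with hL
  have hcos : ∫ x in (0:ℝ)..(π/2), Real.log (Real.cos x) = L := reflect_integral Real.log
  have hdouble : ∫ x in (0:ℝ)..(π/2), Real.log (Real.sin (2*x)) = L :=
    double_integral Real.log II_logsin
  have hu : IntervalIntegrable (fun x => Real.log (Real.sin (2*x))) volume 0 (π/2) := by
    have := II_logsin_pi.comp_mul_left (c := 2)
    norm_num at this
    exact this
  have hae : (∫ x in (0:ℝ)..(π/2), (Real.log (Real.sin x) + Real.log (Real.cos x)))
      = ∫ x in (0:ℝ)..(π/2), (Real.log (Real.sin (2*x)) - Real.log 2) := by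
    apply intervalIntegral.integral_congr_ae
    filter_upwards [ae_ne_pi_div_two] with x hne hmem
    rw [Set.uIoc_of_le (by positivity : (0:ℝ) ≤ π/2)] at hmem
    exact sin_cos_log_identity hmem.1 (lt_of_le_of_ne hmem.2 hne)
  rw [intervalIntegral.integral_add II_logsin II_logcos,
    intervalIntegral.integral_sub hu (intervalIntegrable_const),
    hcos, hdouble, intervalIntegral.integral_const] at hae
  simp only [smul_eq_mul, sub_zero] at hae
  linarith

lemma eq1 : (∫ x in (0:ℝ)..(π/2), (Real.log (Real.sin x))^2)
      + 2 * (∫ x in (0:ℝ)..(π/2), Real.log (Real.sin x) * Real.log (Real.cos x))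
    = 3*π/2 * (Real.log 2)^2 := by
  set J := ∫ x in (0:ℝ)..(π/2), (Real.log (Real.sin x))^2 with hJ
  set C := ∫ x in (0:ℝ)..(π/2), Real.log (Real.sin x) * Real.log (Real.cos x) with hC
  have hcos : ∫ x in (0:ℝ)..(π/2), (Real.log (Real.cos x))^2 = J :=
    reflect_integral (fun t => (Real.log t)^2)
  have hdouble : ∫ x in (0:ℝ)..(π/2), (Real.log (Real.sin (2*x)))^2 = J :=
    double_integral (fun t => (Real.log t)^2) II_logsin_sq
  have hu2 : IntervalIntegrable (fun x => (Real.log (Real.sin (2*x)))^2) volume 0 (π/2) := by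
    have := II_logsin_sq_pi.comp_mul_left (c := 2)
    norm_num at this
    exact this
  have hu : IntervalIntegrable (fun x => Real.log (Real.sin (2*x))) volume 0 (π/2) := by
    have := II_logsin_pi.comp_mul_left (c := 2)
    norm_num at this
    exact this
  have hdl : (∫ x in (0:ℝ)..(π/2), Real.log (Real.sin (2*x))) = -(π/2) * Real.log 2 := by
    rw [double_integral Real.log II_logsin]; exact logsin_integral
  have hae : (∫ x in (0:ℝ)..(π/2),
        ((Real.log (Real.sin x))^2 + 2 * (Real.log (Real.sin x) * Real.log (Real.cos x))
          + (Real.log (Real.cos x))^2))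
      = ∫ x in (0:ℝ)..(π/2),
        ((Real.log (Real.sin (2*x)))^2 - 2 * Real.log 2 * Real.log (Real.sin (2*x))
          + (Real.log 2)^2) := by
    apply intervalIntegral.integral_congr_ae
    filter_upwards [ae_ne_pi_div_two] with x hne hmem
    rw [Set.uIoc_of_le (by positivity : (0:ℝ) ≤ π/2)] at hmem
    have hkey := sin_cos_log_identity hmem.1 (lt_of_le_of_ne hmem.2 hne)
    have h2 : Real.log (Real.sin (2*x)) = Real.log (Real.sin x) + Real.log (Real.cos x)
        + Real.log 2 := by linarith
    rw [h2]; ring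
  rw [intervalIntegral.integral_add (II_logsin_sq.add (II_prod.const_mul 2)) II_logcos_sq,
    intervalIntegral.integral_add II_logsin_sq (II_prod.const_mul 2),
    intervalIntegral.integral_const_mul,
    intervalIntegral.integral_add ((hu2.sub (hu.const_mul (2 * Real.log 2)))) intervalIntegrable_const,
    intervalIntegral.integral_sub hu2 (hu.const_mul (2 * Real.log 2)),
    intervalIntegral.integral_const_mul,
    hcos, hdouble, hdl, intervalIntegral.integral_const] at hae
  simp only [smul_eq_mul, sub_zero] at hae
  nlinarith [hae]

lemma II_log_sq_01 : IntervalIntegrable (fun u : ℝ => (Real.log u)^2) volume 0 1 := by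
  have hint : IntervalIntegrable (fun x : ℝ => (16:ℝ) * x ^ (-(1/2) : ℝ)) volume 0 1 :=
    (intervalIntegral.intervalIntegrable_rpow' (by norm_num)).const_mul _
  refine hint.mono_fun ((Real.measurable_log.pow_const 2).aestronglyMeasurable) ?_
  rw [Set.uIoc_of_le (by norm_num : (0:ℝ) ≤ 1)]
  filter_upwards [ae_restrict_mem measurableSet_Ioc] with x hx
  simp only [Real.norm_eq_abs]
  rw [abs_of_nonneg (sq_nonneg _),
    abs_of_nonneg (mul_nonneg (by norm_num) (Real.rpow_nonneg hx.1.le _))]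
  exact sq_log_le x hx.1 hx.2

lemma II_pow_log_sq (n : ℕ) :
    IntervalIntegrable (fun u : ℝ => u^(2*n) * (Real.log u)^2) volume 0 1 := by
  refine II_log_sq_01.mono_fun ?_ ?_
  · exact ((measurable_id.pow_const (2*n)).mul (Real.measurable_log.pow_const 2)).aestronglyMeasurable
  rw [Set.uIoc_of_le (by norm_num : (0:ℝ) ≤ 1)]
  filter_upwards [ae_restrict_mem measurableSet_Ioc] with x hx
  simp only [Real.norm_eq_abs]
  rw [abs_of_nonneg (mul_nonneg (pow_nonneg hx.1.le _) (sq_nonneg _)),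
    abs_of_nonneg (sq_nonneg _)]
  have hx1 : x^(2*n) ≤ 1 := pow_le_one₀ hx.1.le hx.2
  nlinarith [sq_nonneg (Real.log x), pow_nonneg hx.1.le (2*n)]

lemma int_pow_log_sq (n : ℕ) :
    ∫ u in (0:ℝ)..1, u^(2*n) * (Real.log u)^2 = 2 / (2*(n:ℝ)+1)^3 := by
  set m : ℕ := 2*n+1 with hm
  have hmR : (m : ℝ) = 2*(n:ℝ)+1 := by rw [hm]; push_cast; ring
  have hm0 : (0:ℝ) < (m:ℝ) := by rw [hmR]; positivity
  set F : ℝ → ℝ := fun u => u^m * ((Real.log u)^2/(m:ℝ) - 2*Real.log u/(m:ℝ)^2 + 2/(m:ℝ)^3)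
    with hF
  have hderiv : ∀ x ∈ Set.Ioo (0:ℝ) 1, HasDerivAt F (x^(2*n) * (Real.log x)^2) x := by
    intro x hx
    have hx0 : x ≠ 0 := hx.1.ne'
    have h1 : HasDerivAt (fun u : ℝ => u^m) ((m:ℝ) * x^(m-1)) x := by
      simpa using hasDerivAt_pow m x
    have hlog : HasDerivAt Real.log (1/x) x := by
      simpa [one_div] using Real.hasDerivAt_log hx0
    have h2 : HasDerivAt (fun u : ℝ => (Real.log u)^2/(m:ℝ) - 2*Real.log u/(m:ℝ)^2 + 2/(m:ℝ)^3)
        (2 * Real.log x * (1/x) / (m:ℝ) - 2*(1/x)/(m:ℝ)^2) x := by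
      have ha : HasDerivAt (fun u : ℝ => (Real.log u)^2) (2 * Real.log x * (1/x)) x := by
        have := hlog.fun_pow 2
        simpa [mul_comm, mul_assoc] using this
      have hb := (ha.div_const (m:ℝ))
      have hc := ((hlog.const_mul (2:ℝ)).div_const ((m:ℝ)^2))
      have := (hb.fun_sub hc).add_const (2/(m:ℝ)^3)
      convert this using 1
    have hd : HasDerivAt F _ x := h1.fun_mul h2
    convert hd using 1
    have hm1 : m - 1 = 2*n := by omega
    rw [hm1, hm]
    have hx0' : x ≠ 0 := hx.1.ne'
    field_simp
    ring
  have htend0 : Filter.Tendsto F (nhdsWithin 0 (Set.Ioi 0)) (nhds 0) := by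
    have hr : (0:ℝ) < (m:ℝ)/2 := by positivity
    have h1 : Filter.Tendsto (fun x : ℝ => Real.log x * x ^ ((m:ℝ)/2))
        (nhdsWithin 0 (Set.Ioi 0)) (nhds 0) := tendsto_log_mul_rpow_nhdsGT_zero hr
    have hsq : Filter.Tendsto (fun x : ℝ => (Real.log x * x ^ ((m:ℝ)/2))^2)
        (nhdsWithin 0 (Set.Ioi 0)) (nhds 0) := by
      have := h1.mul h1
      simpa [sq] using this
    have hm' : Filter.Tendsto (fun x : ℝ => Real.log x * x ^ ((m:ℝ)))
        (nhdsWithin 0 (Set.Ioi 0)) (nhds 0) := tendsto_log_mul_rpow_nhdsGT_zero hm0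
    have hpow : Filter.Tendsto (fun x : ℝ => x ^ (m:ℕ)) (nhdsWithin 0 (Set.Ioi 0)) (nhds 0) := by
      have : Filter.Tendsto (fun x : ℝ => x ^ (m:ℕ)) (nhds 0) (nhds (0^(m:ℕ))) :=
        (continuous_pow m).tendsto 0
      rw [zero_pow (by omega : m ≠ 0)] at this
      exact this.mono_left nhdsWithin_le_nhds
    -- F x = (log x * x^(m/2))^2 / m - 2*(log x * x^m)/m^2 + 2*x^m/m^3 on Ioi 0
    have hcongr : ∀ᶠ x in nhdsWithin (0:ℝ) (Set.Ioi 0),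
        F x = (Real.log x * x ^ ((m:ℝ)/2))^2/(m:ℝ) - 2*(Real.log x * x ^ ((m:ℝ)))/(m:ℝ)^2
          + 2*x^(m:ℕ)/(m:ℝ)^3 := by
      filter_upwards [self_mem_nhdsWithin] with x (hx : 0 < x)
      rw [hF]
      have hrp2 : (x ^ ((m:ℝ)/2))^2 = x ^ (m:ℝ) := by
        rw [← Real.rpow_natCast (x ^ ((m:ℝ)/2)) 2, ← Real.rpow_mul hx.le]
        norm_num
      have hrpn : x ^ ((m:ℝ)) = x ^ (m:ℕ) := Real.rpow_natCast x m
      simp only [mul_pow, hrp2, hrpn]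
      field_simp
    refine Filter.Tendsto.congr' (hcongr.mono fun x h => h.symm) ?_
    have hlim := ((hsq.div_const (m:ℝ)).sub ((hm'.const_mul 2).div_const ((m:ℝ)^2))).add
      ((hpow.const_mul 2).div_const ((m:ℝ)^3))
    convert hlim using 2
    norm_num
  have htend1 : Filter.Tendsto F (nhdsWithin 1 (Set.Iio 1)) (nhds (2/(m:ℝ)^3)) := by
    have hcont : ContinuousAt F 1 := by
      apply ContinuousAt.mul
      · exact (continuous_pow m).continuousAt
      · apply ContinuousAt.add
        · apply ContinuousAt.sub
          · exact ((Real.continuousAt_log one_ne_zero).pow 2).div_const _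
          · exact ((Real.continuousAt_log one_ne_zero).const_mul 2).div_const _
        · exact continuousAt_const
    have hF1 : F 1 = 2/(m:ℝ)^3 := by rw [hF]; simp
    rw [← hF1]
    exact hcont.continuousWithinAt.tendsto
  have := intervalIntegral.integral_eq_sub_of_hasDerivAt_of_tendsto (by norm_num : (0:ℝ) < 1)
    hderiv (II_pow_log_sq n) htend0 htend1
  rw [this, hmR]
  ring

lemma beta3 : HasSum (fun k : ℕ => (-1:ℝ)^k / (2*(k:ℝ)+1)^3) (π^3/32) := by
  have h := hasSum_L_function_mod_four_eval_three
  have hinj : Function.Injective (fun k : ℕ => 2*k+1) := by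
    intro a b hab
    have : 2*a+1 = 2*b+1 := hab
    omega
  have hzero : ∀ n ∉ Set.range (fun k : ℕ => 2*k+1),
      (1:ℝ) / (n:ℝ)^3 * Real.sin (π * n / 2) = 0 := by
    intro n hn
    rcases Nat.even_or_odd n with he | ho
    swap
    · obtain ⟨m, hm⟩ := ho
      exact absurd ⟨m, show 2*m+1 = n by omega⟩ hn
    obtain ⟨j, hj⟩ : ∃ j, n = 2*j := by
      obtain ⟨j, hj⟩ := he; exact ⟨j, by omega⟩
    subst hj
    have : Real.sin (π * (2*j) / 2) = 0 := by
      have : (π * (2*(j:ℝ)) / 2) = j * π := by ring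
      rw [this]
      exact Real.sin_nat_mul_pi j
    rw [show ((2*j : ℕ):ℝ) = 2*(j:ℝ) by push_cast; ring, this, mul_zero]
  have h2 := (Function.Injective.hasSum_iff hinj hzero).mpr h
  have heq : (fun k : ℕ => (1:ℝ) / ((2*k+1 : ℕ):ℝ)^3 * Real.sin (π * ((2*k+1 : ℕ):ℝ) / 2))
      = fun k : ℕ => (-1:ℝ)^k / (2*(k:ℝ)+1)^3 := by
    funext k
    have hc : ((2*k+1 : ℕ):ℝ) = 2*(k:ℝ)+1 := by push_cast; ring
    rw [hc]
    have hs : Real.sin (π * (2*(k:ℝ)+1) / 2) = (-1:ℝ)^k := by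
      have : (π * (2*(k:ℝ)+1) / 2) = π/2 + (k:ℝ) * π := by ring
      rw [this, Real.sin_add_nat_mul_pi, Real.sin_pi_div_two, mul_one]
    rw [hs]
    ring
  rw [Function.comp_def] at h2
  rw [heq] at h2
  exact h2

lemma int_log_sq_Ioo : IntegrableOn (fun u : ℝ => (Real.log u)^2) (Set.Ioo 0 1) volume := by
  have := (intervalIntegrable_iff_integrableOn_Ioc_of_le (by norm_num : (0:ℝ) ≤ 1)).mp II_log_sq_01
  exact this.mono_set Set.Ioo_subset_Ioc_self

lemma Q_val : ∫ u in Set.Ioo (0:ℝ) 1, (Real.log u)^2 / (1+u^2) = π^3/16 := by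
  set f : ℝ → ℝ := fun u => (Real.log u)^2 / (1+u^2) with hf
  set F : ℕ → ℝ → ℝ := fun N u => (∑ n ∈ Finset.range N, (-1:ℝ)^n * u^(2*n)) * (Real.log u)^2
    with hFdef
  have hmeas : ∀ N, AEStronglyMeasurable (F N) (volume.restrict (Set.Ioo (0:ℝ) 1)) := by
    intro N
    apply Measurable.aestronglyMeasurable
    apply Measurable.mul _ (Real.measurable_log.pow_const 2)
    exact Finset.measurable_sum _ (fun n _ => (measurable_id.pow_const (2*n)).const_mul _)
  have hbound : ∀ N, ∀ᵐ u ∂(volume.restrict (Set.Ioo (0:ℝ) 1)),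
      ‖F N u‖ ≤ 2 * (Real.log u)^2 := by
    intro N
    filter_upwards [ae_restrict_mem measurableSet_Ioo] with u hu
    have hu0 : 0 < u := hu.1
    have hu1 : u < 1 := hu.2
    have hgeom : ∑ n ∈ Finset.range N, (-1:ℝ)^n * u^(2*n)
        = (1 - (-(u^2))^N) / (1 + u^2) := by
      have hne : -(u^2) ≠ 1 := by nlinarith
      have := geom_sum_eq hne N
      calc ∑ n ∈ Finset.range N, (-1:ℝ)^n * u^(2*n)
          = ∑ n ∈ Finset.range N, (-(u^2))^n := by
            apply Finset.sum_congr rfl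
            intro n _
            rw [neg_pow, pow_mul]
            ring
        _ = ((-(u^2))^N - 1) / (-(u^2) - 1) := this
        _ = (1 - (-(u^2))^N) / (1 + u^2) := by
            rw [div_eq_div_iff (by nlinarith) (by nlinarith)]
            ring
    simp only [hFdef]
    simp only [Real.norm_eq_abs, abs_mul, abs_of_nonneg (sq_nonneg (Real.log u))]
    rw [hgeom]
    have habs : |(1 - (-(u^2))^N) / (1 + u^2)| ≤ 2 := by
      rw [abs_div]
      have h1 : |1 - (-(u^2))^N| ≤ 2 := by
        have : |(-(u^2))^N| ≤ 1 := by
          rw [abs_pow]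
          apply pow_le_one₀ (abs_nonneg _)
          rw [abs_neg, abs_of_nonneg (sq_nonneg u)]
          nlinarith
        calc |1 - (-(u^2))^N| ≤ |1| + |(-(u^2))^N| := abs_sub _ _
          _ ≤ 1 + 1 := by rw [abs_one]; linarith
          _ = 2 := by norm_num
      have h2 : (1:ℝ) ≤ |1 + u^2| := by
        rw [abs_of_nonneg (by positivity)]
        nlinarith
      calc |1 - (-(u^2))^N| / |1 + u^2| ≤ |1 - (-(u^2))^N| / 1 := by
            apply div_le_div_of_nonneg_left (abs_nonneg _) one_pos h2
          _ ≤ 2 := by rw [div_one]; exact h1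
    nlinarith [sq_nonneg (Real.log u), abs_nonneg ((1 - (-(u^2))^N) / (1 + u^2))]
  have hlim : ∀ᵐ u ∂(volume.restrict (Set.Ioo (0:ℝ) 1)),
      Filter.Tendsto (fun N => F N u) Filter.atTop (nhds (f u)) := by
    filter_upwards [ae_restrict_mem measurableSet_Ioo] with u hu
    have hu0 : 0 < u := hu.1
    have hu1 : u < 1 := hu.2
    have hgeom : ∀ N, F N u = (1 - (-(u^2))^N) / (1 + u^2) * (Real.log u)^2 := by
      intro N
      simp only [hFdef]
      congr 1
      have hne : -(u^2) ≠ 1 := by nlinarith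
      have := geom_sum_eq hne N
      calc ∑ n ∈ Finset.range N, (-1:ℝ)^n * u^(2*n)
          = ∑ n ∈ Finset.range N, (-(u^2))^n := by
            apply Finset.sum_congr rfl
            intro n _
            rw [neg_pow, pow_mul]
            ring
        _ = ((-(u^2))^N - 1) / (-(u^2) - 1) := this
        _ = (1 - (-(u^2))^N) / (1 + u^2) := by
            rw [div_eq_div_iff (by nlinarith) (by nlinarith)]
            ring
    have hpow : Filter.Tendsto (fun N : ℕ => (-(u^2))^N) Filter.atTop (nhds 0) := by
      apply tendsto_pow_atTop_nhds_zero_of_abs_lt_one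
      rw [abs_neg, abs_of_nonneg (sq_nonneg u)]
      nlinarith
    have : Filter.Tendsto (fun N => (1 - (-(u^2))^N) / (1 + u^2) * (Real.log u)^2)
        Filter.atTop (nhds ((1 - 0) / (1 + u^2) * (Real.log u)^2)) := by
      apply Filter.Tendsto.mul _ tendsto_const_nhds
      apply Filter.Tendsto.div_const
      exact (tendsto_const_nhds.sub hpow)
    simp only [sub_zero] at this
    rw [hf]
    simp only [one_div]
    convert this.congr (fun N => (hgeom N).symm) using 2
    ring
  have hbint : Integrable (fun u : ℝ => 2 * (Real.log u)^2)
      (volume.restrict (Set.Ioo (0:ℝ) 1)) := (int_log_sq_Ioo.const_mul 2)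
  have hdct := MeasureTheory.tendsto_integral_of_dominated_convergence _ hmeas hbint hbound hlim
  -- compute ∫ F N
  have hFint : ∀ N, ∫ u in Set.Ioo (0:ℝ) 1, F N u
      = ∑ n ∈ Finset.range N, (-1:ℝ)^n * (2 / (2*(n:ℝ)+1)^3) := by
    intro N
    have hexp : ∀ u : ℝ, F N u = ∑ n ∈ Finset.range N, (-1:ℝ)^n * (u^(2*n) * (Real.log u)^2) := by
      intro u
      simp only [hFdef]
      rw [Finset.sum_mul]
      apply Finset.sum_congr rfl
      intro n _
      ring
    simp only [hexp]
    rw [MeasureTheory.integral_finset_sum]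
    · apply Finset.sum_congr rfl
      intro n _
      rw [MeasureTheory.integral_const_mul]
      congr 1
      have hii := (intervalIntegrable_iff_integrableOn_Ioc_of_le
        (by norm_num : (0:ℝ) ≤ 1)).mp (II_pow_log_sq n)
      have := int_pow_log_sq n
      rw [intervalIntegral.integral_of_le (by norm_num : (0:ℝ) ≤ 1)] at this
      rw [← MeasureTheory.integral_Ioc_eq_integral_Ioo]
      exact this
    · intro n _
      apply Integrable.const_mul
      exact ((intervalIntegrable_iff_integrableOn_Ioc_of_le
        (by norm_num : (0:ℝ) ≤ 1)).mp (II_pow_log_sq n)).mono_set Set.Ioo_subset_Ioc_self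
  rw [funext hFint] at hdct  -- maybe fails; fallback below
  have hsum : Filter.Tendsto (fun N => ∑ n ∈ Finset.range N, (-1:ℝ)^n * (2 / (2*(n:ℝ)+1)^3))
      Filter.atTop (nhds (π^3/16)) := by
    have := (beta3.mul_left 2).tendsto_sum_nat
    have heq : (fun n : ℕ => 2 * ((-1:ℝ)^n / (2*(n:ℝ)+1)^3))
        = fun n : ℕ => (-1:ℝ)^n * (2 / (2*(n:ℝ)+1)^3) := by
      funext n; ring
    rw [heq] at this
    convert this using 2
    ring
  exact tendsto_nhds_unique hdct hsum

-- integrand g on (0,∞)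
noncomputable def gg : ℝ → ℝ := fun u => (Real.log u)^2 / (1+u^2)

lemma intQ : IntegrableOn gg (Set.Ioo 0 1) volume := by
  refine Integrable.mono int_log_sq_Ioo ?_ ?_
  · exact ((Real.measurable_log.pow_const 2).div
      ((measurable_const.add (measurable_id.pow_const 2)))).aestronglyMeasurable
  filter_upwards [ae_restrict_mem measurableSet_Ioo] with u hu
  simp only [Real.norm_eq_abs, gg]
  rw [abs_of_nonneg (by positivity : (0:ℝ) ≤ (Real.log u)^2 / (1+u^2)),
    abs_of_nonneg (sq_nonneg _)]
  rw [div_le_iff₀ (by nlinarith [sq_nonneg u] : (0:ℝ) < 1+u^2)]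
  nlinarith [sq_nonneg (Real.log u), sq_nonneg u]

lemma image_inv_Ioo : (fun u : ℝ => u⁻¹) '' (Set.Ioo 0 1) = Set.Ioi 1 := by
  ext y
  constructor
  · rintro ⟨u, hu, rfl⟩
    exact Set.mem_Ioi.mpr ((one_lt_inv₀ hu.1).mpr hu.2)
  · intro hy
    have hy1 : 1 < y := hy
    refine ⟨y⁻¹, ⟨by positivity, ?_⟩, by simp⟩
    exact inv_lt_one_of_one_lt₀ hy1

lemma inv_hasDeriv : ∀ u ∈ Set.Ioo (0:ℝ) 1,
    HasDerivWithinAt (fun u : ℝ => u⁻¹) (-(u^2)⁻¹) (Set.Ioo 0 1) u := fun u hu =>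
  (hasDerivAt_inv hu.1.ne').hasDerivWithinAt

lemma inv_injOn : Set.InjOn (fun u : ℝ => u⁻¹) (Set.Ioo 0 1) := fun a _ b _ h => by
  rwa [inv_inj] at h

lemma gg_transform : ∀ u ∈ Set.Ioo (0:ℝ) 1, |-(u^2)⁻¹| • gg u⁻¹ = gg u := by
  intro u hu
  have hu0 : 0 < u := hu.1
  simp only [gg, smul_eq_mul, abs_neg, abs_inv, abs_of_nonneg (sq_nonneg u)]
  rw [Real.log_inv, neg_sq]
  have h2 : (0:ℝ) < 1 + u⁻¹^2 := by positivity
  have h3 : (0:ℝ) < 1 + u^2 := by positivity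
  field_simp
  ring

lemma intP1 : IntegrableOn gg (Set.Ioi 1) volume := by
  rw [← image_inv_Ioo]
  rw [MeasureTheory.integrableOn_image_iff_integrableOn_abs_deriv_smul
    measurableSet_Ioo inv_hasDeriv inv_injOn]
  exact (intQ.congr_fun (fun u hu => (gg_transform u hu).symm) measurableSet_Ioo)

lemma P_half : ∫ u in Set.Ioi (1:ℝ), gg u = ∫ u in Set.Ioo (0:ℝ) 1, gg u := by
  rw [← image_inv_Ioo,
    MeasureTheory.integral_image_eq_integral_abs_deriv_smul measurableSet_Ioo inv_hasDeriv
      inv_injOn]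
  exact setIntegral_congr_fun measurableSet_Ioo (fun u hu => gg_transform u hu)

lemma P_val : ∫ u in Set.Ioi (0:ℝ), gg u = π^3/8 := by
  have hsplit : Set.Ioo (0:ℝ) 1 ∪ Set.Ici 1 = Set.Ioi 0 := Set.Ioo_union_Ici_eq_Ioi (by norm_num)
  have hdisj : Disjoint (Set.Ioo (0:ℝ) 1) (Set.Ici 1) := by
    rw [Set.disjoint_left]
    intro u hu hu'
    exact absurd hu.2 (not_lt.mpr hu')
  have hint2 : IntegrableOn gg (Set.Ici 1) volume :=
    (integrableOn_Ici_iff_integrableOn_Ioi).mpr intP1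
  rw [← hsplit, MeasureTheory.setIntegral_union hdisj measurableSet_Ici intQ hint2,
    MeasureTheory.integral_Ici_eq_integral_Ioi, P_half]
  have hQ : ∫ u in Set.Ioo (0:ℝ) 1, gg u = π^3/16 := Q_val
  rw [hQ]
  ring

lemma image_tan01 : Real.tan '' (Set.Ioo 0 (π/2)) = Set.Ioi 0 := by
  ext y
  constructor
  · rintro ⟨x, hx, rfl⟩
    exact Set.mem_Ioi.mpr (Real.tan_pos_of_pos_of_lt_pi_div_two hx.1 hx.2)
  · intro hy
    have hy0 : (0:ℝ) < y := hy
    refine ⟨Real.arctan y, ⟨?_, Real.arctan_lt_pi_div_two y⟩, Real.tan_arctan y⟩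
    have := Real.arctan_strictMono hy0
    rwa [Real.arctan_zero] at this

lemma cos_pos_Ioo : ∀ x ∈ Set.Ioo (0:ℝ) (π/2), 0 < Real.cos x := fun x hx =>
  Real.cos_pos_of_mem_Ioo ⟨by linarith [Real.pi_pos, hx.1], hx.2⟩

lemma tan_hasDeriv : ∀ x ∈ Set.Ioo (0:ℝ) (π/2),
    HasDerivWithinAt Real.tan (1 / Real.cos x ^ 2) (Set.Ioo 0 (π/2)) x := fun x hx =>
  (Real.hasDerivAt_tan (cos_pos_Ioo x hx).ne').hasDerivWithinAt

lemma tan_injOn : Set.InjOn Real.tan (Set.Ioo 0 (π/2)) := by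
  apply Real.injOn_tan.mono
  intro x hx
  exact ⟨by linarith [Real.pi_pos, hx.1], hx.2⟩

lemma subst_tan (g : ℝ → ℝ) : ∫ x in Set.Ioi (0:ℝ), g x
    = ∫ x in Set.Ioo (0:ℝ) (π/2), (1 + Real.tan x ^ 2) * g (Real.tan x) := by
  rw [← image_tan01,
    MeasureTheory.integral_image_eq_integral_abs_deriv_smul measurableSet_Ioo tan_hasDeriv
      tan_injOn]
  apply setIntegral_congr_fun measurableSet_Ioo
  intro x hx
  have hc := cos_pos_Ioo x hx
  have h1 : (1:ℝ) / Real.cos x ^ 2 = 1 + Real.tan x ^ 2 := by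
    rw [one_div, ← Real.inv_one_add_tan_sq hc.ne', inv_inv]
  show |1 / Real.cos x ^ 2| • g (Real.tan x) = (1 + Real.tan x ^ 2) * g (Real.tan x)
  rw [smul_eq_mul, abs_of_pos (by positivity : (0:ℝ) < 1 / Real.cos x ^2), h1]

lemma subst_tan_int (g : ℝ → ℝ)
    (h : IntegrableOn (fun x => (1 + Real.tan x ^ 2) * g (Real.tan x))
      (Set.Ioo 0 (π/2)) volume) : IntegrableOn g (Set.Ioi (0:ℝ)) volume := by
  rw [← image_tan01,
    MeasureTheory.integrableOn_image_iff_integrableOn_abs_deriv_smul measurableSet_Ioo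
      tan_hasDeriv tan_injOn]
  apply h.congr_fun _ measurableSet_Ioo
  intro x hx
  have hc := cos_pos_Ioo x hx
  have h1 : (1:ℝ) / Real.cos x ^ 2 = 1 + Real.tan x ^ 2 := by
    rw [one_div, ← Real.inv_one_add_tan_sq hc.ne', inv_inv]
  show (1 + Real.tan x ^ 2) * g (Real.tan x) = |1 / Real.cos x ^ 2| • g (Real.tan x)
  rw [smul_eq_mul, abs_of_pos (by positivity : (0:ℝ) < 1 / Real.cos x ^2), h1]

lemma T_val : ∫ x in Set.Ioo (0:ℝ) (π/2), (Real.log (Real.tan x))^2 = π^3/8 := by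
  have h := subst_tan gg
  rw [P_val] at h
  rw [h]
  apply setIntegral_congr_fun measurableSet_Ioo
  intro x hx
  have hc := cos_pos_Ioo x hx
  have ht : (0:ℝ) < 1 + Real.tan x ^ 2 := by positivity
  show Real.log (Real.tan x) ^ 2 = (1 + Real.tan x ^ 2) * gg (Real.tan x)
  simp only [gg]
  field_simp

lemma eqT : ∫ x in (0:ℝ)..(π/2), (Real.log (Real.tan x))^2
    = (∫ x in (0:ℝ)..(π/2), (Real.log (Real.sin x))^2) * 2
      - 2 * ∫ x in (0:ℝ)..(π/2), Real.log (Real.sin x) * Real.log (Real.cos x) := by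
  have hcos : ∫ x in (0:ℝ)..(π/2), (Real.log (Real.cos x))^2
      = ∫ x in (0:ℝ)..(π/2), (Real.log (Real.sin x))^2 :=
    reflect_integral (fun t => (Real.log t)^2)
  have hae : (∫ x in (0:ℝ)..(π/2), (Real.log (Real.tan x))^2)
      = ∫ x in (0:ℝ)..(π/2),
        ((Real.log (Real.sin x))^2 - 2 * (Real.log (Real.sin x) * Real.log (Real.cos x))
          + (Real.log (Real.cos x))^2) := by
    apply intervalIntegral.integral_congr_ae
    filter_upwards [ae_ne_pi_div_two] with x hne hmem
    rw [Set.uIoc_of_le (by positivity : (0:ℝ) ≤ π/2)] at hmem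
    have hx1 : 0 < x := hmem.1
    have hx2 : x < π/2 := lt_of_le_of_ne hmem.2 hne
    have hs : 0 < Real.sin x := Real.sin_pos_of_pos_of_lt_pi hx1 (by linarith [Real.pi_pos])
    have hc : 0 < Real.cos x := Real.cos_pos_of_mem_Ioo ⟨by linarith [Real.pi_pos], hx2⟩
    rw [Real.tan_eq_sin_div_cos, Real.log_div hs.ne' hc.ne']
    ring
  rw [hae, intervalIntegral.integral_add (II_logsin_sq.sub (II_prod.const_mul 2)) II_logcos_sq,
    intervalIntegral.integral_sub II_logsin_sq (II_prod.const_mul 2),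
    intervalIntegral.integral_const_mul, hcos]
  ring

lemma J_val : ∫ x in (0:ℝ)..(π/2), (Real.log (Real.sin x))^2
    = π^3/24 + π/2 * (Real.log 2)^2 := by
  have h1 := eq1
  have h2 := eqT
  have h3 : ∫ x in (0:ℝ)..(π/2), (Real.log (Real.tan x))^2 = π^3/8 := by
    rw [intervalIntegral.integral_of_le (by positivity : (0:ℝ) ≤ π/2),
      MeasureTheory.integral_Ioc_eq_integral_Ioo]
    exact T_val
  rw [h3] at h2
  linarith

lemma A_val : ∫ x in Set.Ioi (0:ℝ), (Real.log (1+x^2))^2 / (1+x^2)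
    = π^3/6 + 2*π*(Real.log 2)^2 := by
  have h := subst_tan (fun u => (Real.log (1+u^2))^2 / (1+u^2))
  rw [h]
  have hcongr : ∫ x in Set.Ioo (0:ℝ) (π/2),
      (1 + Real.tan x ^ 2) * ((Real.log (1+Real.tan x^2))^2 / (1+Real.tan x^2))
      = ∫ x in Set.Ioo (0:ℝ) (π/2), 4 * (Real.log (Real.cos x))^2 := by
    apply setIntegral_congr_fun measurableSet_Ioo
    intro x hx
    have hc := cos_pos_Ioo x hx
    have ht : (0:ℝ) < 1 + Real.tan x ^ 2 := by positivity
    have hlog : Real.log (1 + Real.tan x ^ 2) = -2 * Real.log (Real.cos x) := by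
      have h1 : (1 + Real.tan x ^ 2) = (Real.cos x ^ 2)⁻¹ := by
        rw [← Real.inv_one_add_tan_sq hc.ne', inv_inv]
      rw [h1, Real.log_inv, Real.log_pow]
      push_cast
      ring
    show (1 + Real.tan x ^ 2) * ((Real.log (1+Real.tan x^2))^2 / (1+Real.tan x^2))
      = 4 * (Real.log (Real.cos x))^2
    rw [hlog]
    field_simp
    ring
  rw [hcongr]
  have h4 : ∫ x in Set.Ioo (0:ℝ) (π/2), 4 * (Real.log (Real.cos x))^2
      = 4 * ∫ x in (0:ℝ)..(π/2), (Real.log (Real.cos x))^2 := by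
    rw [intervalIntegral.integral_of_le (by positivity : (0:ℝ) ≤ π/2),
      MeasureTheory.integral_Ioc_eq_integral_Ioo, MeasureTheory.integral_const_mul]
  rw [h4, reflect_integral (fun t => (Real.log t)^2), J_val]
  ring

theorem stmt_4 :
    (∫ x : ℝ, (Real.log (1 + x ^ 2)) ^ 2 / (1 + x ^ 2))
      = Real.pi ^ 3 / 3 + 4 * Real.pi * (Real.log 2) ^ 2 := by
  have habs : (fun x : ℝ => (Real.log (1 + x ^ 2)) ^ 2 / (1 + x ^ 2))
      = fun x : ℝ => (fun t : ℝ => (Real.log (1 + t ^ 2)) ^ 2 / (1 + t ^ 2)) |x| := by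
    funext x
    simp only [sq_abs]
  rw [habs, integral_comp_abs (f := fun t : ℝ => (Real.log (1 + t ^ 2)) ^ 2 / (1 + t ^ 2)),
    A_val]
  ring
end

section
/- Let s > 2 and define K_s(x) = (1/(2π)) ∫_ℝ e^{−|ξ|^s} cos(x ξ) dξ for x ∈ ℝ (the kernel of the higher-order heat propagator e^{−Λ^s}, whose imaginary part vanishes by symmetry). Then K_s takes a strictly negative value: there exists x ∈ ℝ with K_s(x) < 0; in particular min_{x∈ℝ} K_s(x) < 0. -/
open Real MeasureTheory Complex

lemma aux_exp_bound {t : ℝ} : 1 - rexp (-t) ≤ t := by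
  nlinarith [Real.add_one_le_exp (-t)]

lemma aux_W_lower {u : ℝ} (h0 : 0 ≤ u) (h1 : u ≤ 1) :
    rexp (-2) * u ≤ rexp (-u) - rexp (-(2*u)) := by
  have h2 : rexp (-u) - rexp (-(2*u)) = rexp (-(2*u)) * (rexp u - 1) := by
    rw [mul_sub, ← Real.exp_add]; ring_nf
  rw [h2]
  have h3 : u ≤ rexp u - 1 := by nlinarith [Real.add_one_le_exp u]
  have h4 : rexp (-2) ≤ rexp (-(2*u)) := Real.exp_le_exp.mpr (by nlinarith)
  nlinarith [Real.exp_pos (-(2*u)), Real.exp_pos (-2)]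

lemma gauss_cos_integrable {b : ℝ} (hb : 0 < b) (t : ℝ) :
    Integrable fun x : ℝ => rexp (-b*x^2) * Real.cos (t*x) := by
  refine (integrable_exp_neg_mul_sq hb).mono'
    ((Real.continuous_exp.comp (by continuity)).mul (Real.continuous_cos.comp (by continuity))).aestronglyMeasurable
    (Filter.Eventually.of_forall fun x => ?_)
  rw [Real.norm_eq_abs, abs_mul, Real.abs_exp]
  calc rexp (-b*x^2) * |Real.cos (t*x)| ≤ rexp (-b*x^2) * 1 :=
        mul_le_mul_of_nonneg_left (Real.abs_cos_le_one _) (Real.exp_pos _).le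
    _ = rexp (-b*x^2) := mul_one _

lemma rpow_gauss_integrable {s b : ℝ} (hs : 0 ≤ s) (hb : 0 < b) :
    Integrable fun u : ℝ => |u|^s * rexp (-b*u^2) := by
  have hcont : Continuous fun u : ℝ => |u|^s * rexp (-b*u^2) := by
    refine Continuous.mul ?_ (Real.continuous_exp.comp (by continuity))
    exact continuous_abs.rpow_const fun x => Or.inr hs
  refine ((integrable_exp_neg_mul_sq (show (0:ℝ) < b/2 by linarith)).const_mul
    (rexp (s^2/(2*b)))).mono' hcont.aestronglyMeasurable (Filter.Eventually.of_forall fun u => ?_)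
  rw [Real.norm_eq_abs, abs_mul, Real.abs_exp, _root_.abs_of_nonneg (Real.rpow_nonneg (abs_nonneg u) s),
    ← Real.exp_add]
  have h1 : |u|^s ≤ rexp (|u| * s) := by
    rw [Real.exp_mul]
    exact Real.rpow_le_rpow (abs_nonneg u) (by linarith [Real.add_one_le_exp (|u|), abs_nonneg u]) hs
  calc |u|^s * rexp (-b*u^2) ≤ rexp (|u| * s) * rexp (-b*u^2) :=
        mul_le_mul_of_nonneg_right h1 (Real.exp_pos _).le
    _ = rexp (|u| * s + -b*u^2) := (Real.exp_add _ _).symm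
    _ ≤ rexp (s^2/(2*b) + -(b/2)*u^2) := by
        apply Real.exp_le_exp.mpr
        have := sq_nonneg (s - b*|u|)
        have hb' := hb
        have h2 : u^2 = |u|^2 := (_root_.sq_abs u).symm
        rw [h2, div_add' _ _ _ (by positivity), le_div_iff₀ (by positivity)]
        nlinarith [abs_nonneg u]

lemma phi_cont {s : ℝ} (hs : 0 < s) : Continuous fun ξ : ℝ => rexp (-(|ξ|^s)) :=
  Real.continuous_exp.comp (Continuous.neg (continuous_abs.rpow_const fun x => Or.inr hs.le))

lemma phi_integrable {s : ℝ} (hs : 2 ≤ s) : Integrable fun ξ : ℝ => rexp (-(|ξ|^s)) := by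
  refine ((integrable_exp_neg_mul_sq one_pos).const_mul (rexp 1)).mono'
    (phi_cont (by linarith)).aestronglyMeasurable (Filter.Eventually.of_forall fun ξ => ?_)
  rw [Real.norm_eq_abs, Real.abs_exp, ← Real.exp_add]
  apply Real.exp_le_exp.mpr
  rcases le_or_gt (|ξ|) 1 with h | h
  · have : (0:ℝ) ≤ |ξ|^s := Real.rpow_nonneg (abs_nonneg _) _
    nlinarith [abs_nonneg ξ, _root_.sq_abs ξ]
  · have h2 : |ξ|^(2:ℝ) ≤ |ξ|^s := Real.rpow_le_rpow_of_exponent_le h.le hs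
    rw [show |ξ|^(2:ℝ) = |ξ|^(2:ℕ) by rw [← Real.rpow_natCast]; norm_num, _root_.sq_abs] at h2
    linarith

lemma cosGauss {b : ℝ} (hb : 0 < b) (t : ℝ) :
    ∫ x : ℝ, Real.exp (-b * x ^ 2) * Real.cos (t * x)
      = Real.sqrt (π / b) * Real.exp (-t ^ 2 / (4 * b)) := by
  have h := fourierIntegral_gaussian (b := (b : ℂ)) (by simpa using hb) (t : ℂ)
  have hint : Integrable (fun x : ℝ => cexp (I * t * x) * cexp (-(b:ℂ) * x ^ 2)) := by
    have := integrable_cexp_quadratic (b := (b:ℂ)) (by simpa using hb) (I * t) 0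
    refine this.congr (Filter.Eventually.of_forall fun x => ?_)
    simp only [← Complex.exp_add]
    congr 1
    ring
  have hre := (integral_re hint).symm
  rw [h] at hre
  have hL : ∀ x : ℝ, RCLike.re (cexp (I * t * x) * cexp (-(b:ℂ) * x ^ 2))
      = Real.exp (-b * x ^ 2) * Real.cos (t * x) := by
    intro x
    rw [← Complex.exp_add]
    have : I * t * x + -(b:ℂ) * x ^ 2 = (-b * x^2 : ℝ) + (t * x : ℝ) * I := by
      push_cast; ring
    rw [this, Complex.exp_add]
    simp only [RCLike.re_to_complex, Complex.mul_re, ← Complex.ofReal_exp,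
      Complex.ofReal_re, Complex.ofReal_im, Complex.exp_ofReal_mul_I_re, zero_mul, sub_zero]
  have hR : RCLike.re (((π : ℂ) / b) ^ (1 / 2 : ℂ) * cexp (-(t:ℂ) ^ 2 / (4 * b)))
      = Real.sqrt (π / b) * Real.exp (-t ^ 2 / (4 * b)) := by
    have h1 : ((π : ℂ) / b) ^ (1 / 2 : ℂ) = ((π / b : ℝ) : ℂ) ^ ((1/2 : ℝ) : ℂ) := by push_cast; ring_nf
    rw [h1, ← Complex.ofReal_cpow (by positivity)]
    have h2 : (-(t:ℂ) ^ 2 / (4 * b)) = ((-t^2/(4*b) : ℝ) : ℂ) := by push_cast; ring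
    rw [h2, ← Complex.ofReal_exp, ← Complex.ofReal_mul]
    simp only [RCLike.re_to_complex, Complex.ofReal_re]
    rw [← Real.sqrt_eq_rpow]
  rw [← hR, hre]
  exact integral_congr_ae (Filter.Eventually.of_forall fun x => (hL x).symm)

lemma aux_final {C c : ℝ} (hC : 0 ≤ C) (hc : 0 < c) : C * (c/(2*(C+1))) < c := by
  rw [mul_div_assoc', div_lt_iff₀ (by positivity)]
  nlinarith

set_option maxHeartbeats 4000000 in
theorem stmt_9 (s : ℝ) (hs : 2 < s) :
    ∃ x : ℝ,
      (1 / (2 * Real.pi)) * (∫ ξ : ℝ, Real.exp (-(|ξ| ^ s)) * Real.cos (x * ξ)) < 0 := by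
  by_contra hcon
  push_neg at hcon
  have hs0 : (0:ℝ) < s := by linarith
  set φ : ℝ → ℝ := fun ξ => rexp (-(|ξ|^s)) with hφdef
  set F : ℝ → ℝ := fun x => ∫ ξ : ℝ, φ ξ * Real.cos (x*ξ) with hFdef
  have intφ : Integrable φ := phi_integrable (by linarith)
  have hφcont : Continuous φ := phi_cont hs0
  have hφpos : ∀ ξ, 0 < φ ξ := fun ξ => Real.exp_pos _
  have hφle1 : ∀ ξ, φ ξ ≤ 1 := fun ξ => Real.exp_le_one_iff.mpr
    (neg_nonpos.mpr (Real.rpow_nonneg (abs_nonneg _) _))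
  have hF_nonneg : ∀ x, 0 ≤ F x := by
    intro x
    by_contra hneg
    push_neg at hneg
    have h2π : (0:ℝ) < 1 / (2*π) := by positivity
    have := hcon x
    nlinarith [mul_pos h2π (neg_pos.mpr hneg)]
  have intFx : ∀ x, Integrable fun ξ => φ ξ * Real.cos (x*ξ) := by
    intro x
    refine intφ.mono' ((hφcont.mul (Real.continuous_cos.comp (by continuity))).aestronglyMeasurable)
      (Filter.Eventually.of_forall fun ξ => ?_)
    rw [Real.norm_eq_abs, abs_mul, _root_.abs_of_nonneg (hφpos ξ).le]
    exact mul_le_of_le_one_right (hφpos ξ).le (Real.abs_cos_le_one _)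
  have hF0 : F 0 = ∫ ξ, φ ξ := by
    simp only [hFdef, zero_mul, Real.cos_zero, mul_one]
  have hF0pos : 0 < F 0 := by
    rw [hF0]
    refine (integral_pos_iff_support_of_nonneg (fun ξ => (hφpos ξ).le) intφ).mpr ?_
    have : Function.support φ = Set.univ := Set.eq_univ_of_forall fun ξ => (hφpos ξ).ne'
    rw [this]
    simp [Real.volume_univ]
  have hFcont : Continuous F := by
    refine continuous_of_dominated (fun x => (intFx x).1) ?_ intφ ?_
    · exact fun x => Filter.Eventually.of_forall fun ξ => by
        rw [Real.norm_eq_abs, abs_mul, _root_.abs_of_nonneg (hφpos ξ).le]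
        exact mul_le_of_le_one_right (hφpos ξ).le (Real.abs_cos_le_one _)
    · exact Filter.Eventually.of_forall fun ξ =>
        (continuous_const.mul (Real.continuous_cos.comp (by continuity)))
  -- neighborhood where F ≥ F0/2
  obtain ⟨δ, hδpos, hδ1, hδF⟩ :
      ∃ δ : ℝ, 0 < δ ∧ δ ≤ 1 ∧ ∀ x ∈ Set.Icc (-δ) δ, F 0 / 2 ≤ F x := by
    have hev : ∀ᶠ x in nhds (0:ℝ), F 0 / 2 < F x :=
      (hFcont.tendsto 0).eventually (eventually_gt_nhds (by linarith))
    rw [Metric.eventually_nhds_iff] at hev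
    obtain ⟨r, hr, h⟩ := hev
    refine ⟨min (r/2) 1, by positivity, min_le_right _ _, fun x hx => ?_⟩
    have hxr : dist x 0 < r := by
      rw [Real.dist_eq, sub_zero]
      have h1 := abs_le.mpr ⟨hx.1.trans' (by simp), hx.2⟩
      have := min_le_left (r/2) 1
      calc |x| ≤ min (r/2) 1 := by
            rw [abs_le]; exact ⟨by simpa using hx.1, hx.2⟩
        _ < r := lt_of_le_of_lt (min_le_left _ _) (by linarith)
    exact (h hxr).le
  set F0 := F 0 with hF0def
  -- constants
  set M1 : ℝ := ∫ u : ℝ, |u|^s * rexp (-(1/4)*u^2) with hM1def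
  set M2 : ℝ := ∫ u : ℝ, |u|^s * rexp (-(1/8)*u^2) with hM2def
  have hM1 : 0 ≤ M1 := integral_nonneg fun u =>
    mul_nonneg (Real.rpow_nonneg (abs_nonneg _) _) (Real.exp_pos _).le
  have hM2 : 0 ≤ M2 := integral_nonneg fun u =>
    mul_nonneg (Real.rpow_nonneg (abs_nonneg _) _) (Real.exp_pos _).le
  set C : ℝ := Real.sqrt π * (M1 + M2) with hCdef
  have hC : 0 ≤ C := mul_nonneg (Real.sqrt_nonneg _) (by linarith)
  set c : ℝ := F0/2 * rexp (-2) * (2*δ^3/3) with hcdef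
  have hc : 0 < c := by positivity
  set ε : ℝ := min δ ((c/(2*(C+1)))^(s-2)⁻¹) with hεdef
  have hεpos : 0 < ε := lt_min hδpos (Real.rpow_pos_of_pos (by positivity) _)
  have hεδ : ε ≤ δ := min_le_left _ _
  have hε1 : ε ≤ 1 := hεδ.trans hδ1
  have hεs : ε^(s-2) ≤ c/(2*(C+1)) := by
    calc ε^(s-2) ≤ ((c/(2*(C+1)))^(s-2)⁻¹)^(s-2) :=
          Real.rpow_le_rpow hεpos.le (min_le_right _ _) (by linarith)
      _ = c/(2*(C+1)) := Real.rpow_inv_rpow (by positivity) (by intro h; exact absurd h (by intro h'; linarith [h'])) 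
  set W : ℝ → ℝ := fun x => rexp (-(ε^2)*x^2) - rexp (-(2*ε^2)*x^2) with hWdef
  have intW1 : Integrable fun x : ℝ => rexp (-(ε^2)*x^2) := integrable_exp_neg_mul_sq (by positivity)
  have intW2 : Integrable fun x : ℝ => rexp (-(2*ε^2)*x^2) := integrable_exp_neg_mul_sq (by positivity)
  have intW : Integrable W := intW1.sub intW2
  have hWnonneg : ∀ x, 0 ≤ W x := by
    intro x
    simp only [hWdef, sub_nonneg]
    apply Real.exp_le_exp.mpr
    nlinarith [sq_nonneg x, sq_nonneg ε]
  have intFW : Integrable fun x => F x * W x := by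
    refine intW.bdd_mul hFcont.aestronglyMeasurable (c := ∫ ξ, φ ξ) (Filter.Eventually.of_forall fun x => ?_)
    rw [Real.norm_eq_abs]
    calc |F x| ≤ ∫ ξ, |φ ξ * Real.cos (x*ξ)| := by
          rw [← Real.norm_eq_abs]
          exact norm_integral_le_integral_norm _
      _ ≤ ∫ ξ, φ ξ := by
          refine integral_mono (intFx x).abs intφ fun ξ => ?_
          rw [abs_mul, _root_.abs_of_nonneg (hφpos ξ).le]
          exact mul_le_of_le_one_right (hφpos ξ).le (Real.abs_cos_le_one _)
  set J : ℝ := ∫ x, F x * W x with hJdef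
  -- lower bound
  have hlow : c * ε^2 ≤ J := by
    have hset : ∫ x in Set.Icc (-δ) δ, F x * W x ≤ J :=
      setIntegral_le_integral intFW
        (Filter.Eventually.of_forall fun x => mul_nonneg (hF_nonneg x) (hWnonneg x))
    have hpt : ∀ x ∈ Set.Icc (-δ) δ, (F0/2 * rexp (-2) * ε^2) * x^2 ≤ F x * W x := by
      intro x hx
      have hFx := hδF x hx
      have hx1 : x^2 ≤ 1 := by
        have h1 : |x| ≤ δ := abs_le.mpr ⟨hx.1, hx.2⟩
        nlinarith [abs_nonneg x, _root_.sq_abs x]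
      have hu0 : (0:ℝ) ≤ ε^2*x^2 := by positivity
      have hu1 : ε^2*x^2 ≤ 1 := by nlinarith [sq_nonneg ε, sq_nonneg x, hεpos.le]
      have hWb := aux_W_lower hu0 hu1
      have hWeq : W x = rexp (-(ε^2*x^2)) - rexp (-(2*(ε^2*x^2))) := by
        simp only [hWdef]; ring_nf
      calc (F0/2 * rexp (-2) * ε^2) * x^2 = (F0/2) * (rexp (-2) * (ε^2*x^2)) := by ring
        _ ≤ F x * (rexp (-(ε^2*x^2)) - rexp (-(2*(ε^2*x^2)))) :=
            mul_le_mul hFx hWb (by positivity) (hF_nonneg x)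
        _ = F x * W x := by rw [hWeq]
    have hint1 : IntegrableOn (fun x : ℝ => (F0/2 * rexp (-2) * ε^2) * x^2) (Set.Icc (-δ) δ) :=
      (Continuous.integrableOn_Icc (by continuity))
    have hmono := setIntegral_mono_on hint1 intFW.integrableOn measurableSet_Icc hpt
    have hval : ∫ x in Set.Icc (-δ) δ, (F0/2 * rexp (-2) * ε^2) * x^2 = c * ε^2 := by
      rw [MeasureTheory.integral_const_mul, integral_Icc_eq_integral_Ioc,
        ← intervalIntegral.integral_of_le (by linarith : -δ ≤ δ), integral_pow, hcdef]
      push_cast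
      ring
    linarith
  -- Fubini
  set G : ℝ → ℝ := fun ξ =>
    Real.sqrt (π/ε^2) * rexp (-ξ^2/(4*ε^2)) - Real.sqrt (π/(2*ε^2)) * rexp (-ξ^2/(8*ε^2)) with hGdef
  have hWcont : Continuous W :=
    (Real.continuous_exp.comp (continuous_const.mul (continuous_pow 2))).sub
      (Real.continuous_exp.comp (continuous_const.mul (continuous_pow 2)))
  have hWabs : ∀ x, |W x| ≤ rexp (-(ε^2)*x^2) := by
    intro x
    rw [_root_.abs_of_nonneg (hWnonneg x)]
    simp only [hWdef]
    nlinarith [Real.exp_pos (-(2*ε^2)*x^2)]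
  have hinner : ∀ ξ:ℝ, (∫ x : ℝ, Real.cos (x*ξ) * W x) = G ξ := by
    intro ξ
    have q : ∀ x:ℝ, Real.cos (x*ξ) * W x
        = rexp (-(ε^2)*x^2) * Real.cos (ξ*x) - rexp (-(2*ε^2)*x^2) * Real.cos (ξ*x) := by
      intro x; simp only [hWdef, mul_comm x ξ]; ring
    simp only [q]
    rw [integral_sub (gauss_cos_integrable (by positivity) ξ) (gauss_cos_integrable (by positivity) ξ),
      cosGauss (show (0:ℝ) < ε^2 by positivity) ξ, cosGauss (show (0:ℝ) < 2*ε^2 by positivity) ξ,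
      hGdef]
    rw [show (4*(2*ε^2)) = 8*ε^2 by ring]
  have hprod : Integrable (Function.uncurry fun x ξ => φ ξ * Real.cos (x*ξ) * W x)
      (volume.prod volume) := by
    have hb : Integrable (fun p : ℝ × ℝ => rexp (-(ε^2)*p.1^2) * φ p.2) (volume.prod volume) :=
      intW1.mul_prod intφ
    refine hb.mono' (Continuous.aestronglyMeasurable ?_) (Filter.Eventually.of_forall fun p => ?_)
    · exact ((hφcont.comp continuous_snd).mul
        (Real.continuous_cos.comp (continuous_fst.mul continuous_snd))).mul
        (hWcont.comp continuous_fst)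
    · simp only [Function.uncurry]
      rw [Real.norm_eq_abs, abs_mul, abs_mul, _root_.abs_of_nonneg (hφpos p.2).le]
      calc φ p.2 * |Real.cos (p.1*p.2)| * |W p.1|
          ≤ φ p.2 * 1 * rexp (-(ε^2)*p.1^2) :=
            mul_le_mul (mul_le_mul_of_nonneg_left (Real.abs_cos_le_one _) (hφpos _).le)
              (hWabs p.1) (abs_nonneg _) (by positivity)
        _ = rexp (-(ε^2)*p.1^2) * φ p.2 := by ring
  have hJG : J = ∫ ξ, φ ξ * G ξ := by
    rw [hJdef]
    have step1 : ∀ x : ℝ, F x * W x = ∫ ξ : ℝ, φ ξ * Real.cos (x*ξ) * W x := by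
      intro x
      exact (MeasureTheory.integral_mul_const _ _).symm
    simp only [step1]
    rw [integral_integral_swap hprod]
    refine integral_congr_ae (Filter.Eventually.of_forall fun ξ => ?_)
    simp only [mul_assoc]
    rw [MeasureTheory.integral_const_mul, hinner ξ]
  have e1 : ∀ ξ:ℝ, -ξ^2/(4*ε^2) = -(1/(4*ε^2))*ξ^2 := fun ξ => by field_simp
  have e2 : ∀ ξ:ℝ, -ξ^2/(8*ε^2) = -(1/(8*ε^2))*ξ^2 := fun ξ => by field_simp
  have intA : Integrable fun ξ : ℝ => rexp (-ξ^2/(4*ε^2)) := by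
    simp only [e1]; exact integrable_exp_neg_mul_sq (by positivity)
  have intB : Integrable fun ξ : ℝ => rexp (-ξ^2/(8*ε^2)) := by
    simp only [e2]; exact integrable_exp_neg_mul_sq (by positivity)
  have intG : Integrable G := ((intA.const_mul _).sub (intB.const_mul _)).congr
    (Filter.Eventually.of_forall fun ξ => rfl)
  have hGA : ∫ ξ : ℝ, rexp (-ξ^2/(4*ε^2)) = Real.sqrt (π/(1/(4*ε^2))) := by
    simp only [e1]; exact integral_gaussian _
  have hGB : ∫ ξ : ℝ, rexp (-ξ^2/(8*ε^2)) = Real.sqrt (π/(1/(8*ε^2))) := by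
    simp only [e2]; exact integral_gaussian _
  have hGint0 : ∫ ξ, G ξ = 0 := by
    rw [hGdef]
    rw [integral_sub (intA.const_mul _) (intB.const_mul _), integral_const_mul, integral_const_mul,
      hGA, hGB, ← Real.sqrt_mul (by positivity), ← Real.sqrt_mul (by positivity)]
    have q1 : π/ε^2 * (π/(1/(4*ε^2))) = (2*π)^2 := by field_simp; ring
    have q2 : π/(2*ε^2) * (π/(1/(8*ε^2))) = (2*π)^2 := by field_simp; ring
    rw [q1, q2, sub_self]
  have intφG : Integrable fun ξ => φ ξ * G ξ :=
    intG.bdd_mul hφcont.aestronglyMeasurable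
      (c := 1) (Filter.Eventually.of_forall fun ξ => by
        rw [Real.norm_eq_abs, _root_.abs_of_nonneg (hφpos ξ).le]; exact hφle1 ξ)
  have intsub : Integrable fun ξ => (φ ξ - 1) * G ξ :=
    (intφG.sub intG).congr (Filter.Eventually.of_forall fun ξ => by simp only [Pi.sub_apply]; ring)
  have hsplit : ∫ ξ, φ ξ * G ξ = ∫ ξ, (φ ξ - 1) * G ξ := by
    have hq : ∫ ξ, (φ ξ - 1) * G ξ = (∫ ξ, φ ξ * G ξ) - ∫ ξ, G ξ := by
      rw [← integral_sub intφG intG]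
      exact integral_congr_ae (Filter.Eventually.of_forall fun ξ => by ring)
    rw [hq, hGint0, sub_zero]
  have i1 : Integrable fun ξ:ℝ => |ξ|^s * rexp (-ξ^2/(4*ε^2)) := by
    simp only [e1]; exact rpow_gauss_integrable hs0.le (by positivity)
  have i2 : Integrable fun ξ:ℝ => |ξ|^s * rexp (-ξ^2/(8*ε^2)) := by
    simp only [e2]; exact rpow_gauss_integrable hs0.le (by positivity)
  have intbound : Integrable fun ξ : ℝ => |ξ|^s *
      (Real.sqrt (π/ε^2) * rexp (-ξ^2/(4*ε^2)) + Real.sqrt (π/(2*ε^2)) * rexp (-ξ^2/(8*ε^2))) :=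
    ((i1.const_mul (Real.sqrt (π/ε^2))).add (i2.const_mul (Real.sqrt (π/(2*ε^2))))).congr
      (Filter.Eventually.of_forall fun ξ => by simp only [Pi.add_apply]; ring)
  have hptb : ∀ ξ : ℝ, (φ ξ - 1) * G ξ ≤ |ξ|^s *
      (Real.sqrt (π/ε^2) * rexp (-ξ^2/(4*ε^2)) + Real.sqrt (π/(2*ε^2)) * rexp (-ξ^2/(8*ε^2))) := by
    intro ξ
    have h1 : |φ ξ - 1| ≤ |ξ|^s := by
      rw [abs_sub_comm, _root_.abs_of_nonneg (by linarith [hφle1 ξ] : (0:ℝ) ≤ 1 - φ ξ)]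
      exact aux_exp_bound
    have h2 : |G ξ| ≤ Real.sqrt (π/ε^2) * rexp (-ξ^2/(4*ε^2))
        + Real.sqrt (π/(2*ε^2)) * rexp (-ξ^2/(8*ε^2)) := by
      refine (abs_sub _ _).trans ?_
      rw [_root_.abs_of_nonneg (by positivity), _root_.abs_of_nonneg (by positivity)]
    calc (φ ξ - 1) * G ξ ≤ |(φ ξ - 1) * G ξ| := le_abs_self _
      _ = |φ ξ - 1| * |G ξ| := abs_mul _ _
      _ ≤ |ξ|^s * (Real.sqrt (π/ε^2) * rexp (-ξ^2/(4*ε^2))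
            + Real.sqrt (π/(2*ε^2)) * rexp (-ξ^2/(8*ε^2))) :=
        mul_le_mul h1 h2 (abs_nonneg _) (Real.rpow_nonneg (abs_nonneg _) _)
  have hs1 : ∫ ξ:ℝ, |ξ|^s * rexp (-ξ^2/(4*ε^2)) = ε * (ε^s * M1) := by
    have hcv := Measure.integral_comp_mul_left
      (fun ξ : ℝ => |ξ|^s * rexp (-ξ^2/(4*ε^2))) ε
    have hptc : ∀ x:ℝ, |ε*x|^s * rexp (-(ε*x)^2/(4*ε^2))
        = ε^s * (|x|^s * rexp (-(1/4)*x^2)) := by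
      intro x
      rw [abs_mul, Real.mul_rpow (abs_nonneg _) (abs_nonneg _), _root_.abs_of_pos hεpos]
      rw [show -(ε*x)^2/(4*ε^2) = -(1/4)*x^2 by field_simp]
      ring
    simp only [hptc] at hcv
    rw [MeasureTheory.integral_const_mul, ← hM1def, smul_eq_mul,
      _root_.abs_of_pos (inv_pos.mpr hεpos)] at hcv
    field_simp at hcv ⊢
    linarith [hcv]
  have hs2 : ∫ ξ:ℝ, |ξ|^s * rexp (-ξ^2/(8*ε^2)) = ε * (ε^s * M2) := by
    have hcv := Measure.integral_comp_mul_left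
      (fun ξ : ℝ => |ξ|^s * rexp (-ξ^2/(8*ε^2))) ε
    have hptc : ∀ x:ℝ, |ε*x|^s * rexp (-(ε*x)^2/(8*ε^2))
        = ε^s * (|x|^s * rexp (-(1/8)*x^2)) := by
      intro x
      rw [abs_mul, Real.mul_rpow (abs_nonneg _) (abs_nonneg _), _root_.abs_of_pos hεpos]
      rw [show -(ε*x)^2/(8*ε^2) = -(1/8)*x^2 by field_simp]
      ring
    simp only [hptc] at hcv
    rw [MeasureTheory.integral_const_mul, ← hM2def, smul_eq_mul,
      _root_.abs_of_pos (inv_pos.mpr hεpos)] at hcv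
    field_simp at hcv ⊢
    linarith [hcv]
  have hbval : ∫ ξ:ℝ, |ξ|^s *
      (Real.sqrt (π/ε^2) * rexp (-ξ^2/(4*ε^2)) + Real.sqrt (π/(2*ε^2)) * rexp (-ξ^2/(8*ε^2)))
      = Real.sqrt (π/ε^2) * (ε * (ε^s * M1)) + Real.sqrt (π/(2*ε^2)) * (ε * (ε^s * M2)) := by
    rw [show (fun ξ:ℝ => |ξ|^s *
        (Real.sqrt (π/ε^2) * rexp (-ξ^2/(4*ε^2)) + Real.sqrt (π/(2*ε^2)) * rexp (-ξ^2/(8*ε^2))))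
      = fun ξ:ℝ => Real.sqrt (π/ε^2) * (|ξ|^s * rexp (-ξ^2/(4*ε^2)))
          + Real.sqrt (π/(2*ε^2)) * (|ξ|^s * rexp (-ξ^2/(8*ε^2))) from funext fun ξ => by ring]
    rw [integral_add (i1.const_mul _) (i2.const_mul _), MeasureTheory.integral_const_mul,
      MeasureTheory.integral_const_mul, hs1, hs2]
  have hsq1 : Real.sqrt (π/ε^2) * ε = Real.sqrt π := by
    rw [Real.sqrt_div Real.pi_pos.le, Real.sqrt_sq hεpos.le, div_mul_cancel₀]
    exact hεpos.ne'
  have hsq2 : Real.sqrt (π/(2*ε^2)) * ε ≤ Real.sqrt π := by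
    rw [show π/(2*ε^2) = (π/2)/ε^2 by ring, Real.sqrt_div (by positivity), Real.sqrt_sq hεpos.le,
      div_mul_cancel₀ _ hεpos.ne']
    exact Real.sqrt_le_sqrt (by linarith [Real.pi_pos])
  have hupp : J ≤ C * ε^s := by
    rw [hJG, hsplit]
    refine (integral_mono intsub intbound hptb).trans ?_
    rw [hbval, hCdef]
    have hεs0 : (0:ℝ) ≤ ε^s := Real.rpow_nonneg hεpos.le _
    have t1 : Real.sqrt (π/ε^2) * (ε * (ε^s * M1)) = (Real.sqrt (π/ε^2) * ε) * (ε^s * M1) := by ring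
    have t2 : Real.sqrt (π/(2*ε^2)) * (ε * (ε^s * M2)) = (Real.sqrt (π/(2*ε^2)) * ε) * (ε^s * M2) := by
      ring
    rw [t1, t2, hsq1]
    have h2 : (Real.sqrt (π/(2*ε^2)) * ε) * (ε^s * M2) ≤ Real.sqrt π * (ε^s * M2) :=
      mul_le_mul_of_nonneg_right hsq2 (by positivity)
    nlinarith [Real.sqrt_nonneg π, mul_nonneg hεs0 hM1, mul_nonneg hεs0 hM2]
  -- conclusion
  have hεs2 : ε^s = ε^(s-2) * ε^2 := by
    rw [← Real.rpow_natCast ε 2, ← Real.rpow_add hεpos]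
    norm_num
  have h1 : c * ε^2 ≤ C * ε^(s-2) * ε^2 := by
    calc c * ε^2 ≤ J := hlow
      _ ≤ C * ε^s := hupp
      _ = C * ε^(s-2) * ε^2 := by rw [hεs2]; ring
  have h2 : c ≤ C * ε^(s-2) := le_of_mul_le_mul_right h1 (by positivity)
  have h3 : C * ε^(s-2) ≤ C * (c/(2*(C+1))) :=
    mul_le_mul_of_nonneg_left hεs hC
  have h4 : C * (c/(2*(C+1))) < c := aux_final hC hc
  linarith
end

section
/- Let d ≥ 1 and s > 2, and define K_{s,d}(x) = (1/(2π)^d) ∫_{ℝ^d} e^{−‖ξ‖^s} cos(x·ξ) dξ for x ∈ ℝ^d (the kernel of the higher-order heat propagator e^{−Λ^s} on ℝ^d, whose imaginary part vanishes by symmetry). Then there exists x ∈ ℝ^d with K_{s,d}(x) < 0; in particular min_{x∈ℝ^d} K_{s,d}(x) < 0. -/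
open MeasureTheory Real Filter Complex
open scoped RealInnerProductSpace Topology

noncomputable section

variable {d : ℕ}

local notation "V" => EuclideanSpace ℝ (Fin d)

/-- The symbol `e^{-‖ξ‖^s}`. -/
def gk (d : ℕ) (s : ℝ) (ξ : EuclideanSpace ℝ (Fin d)) : ℝ := rexp (-(‖ξ‖ ^ s))

/-- The Gaussian `(π/ε)^{d/2} e^{-‖η‖²/(4ε)}`. -/
def Gf (d : ℕ) (ε : ℝ) (η : EuclideanSpace ℝ (Fin d)) : ℝ :=
  (π / ε) ^ ((d : ℝ) / 2) * rexp (-(‖η‖ ^ 2 / (4 * ε)))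

lemma gk_pos (s : ℝ) (ξ : V) : 0 < gk d s ξ := Real.exp_pos _

lemma gk_le_one (s : ℝ) (ξ : V) : gk d s ξ ≤ 1 := by
  rw [gk, Real.exp_le_one_iff, neg_nonpos]
  exact Real.rpow_nonneg (norm_nonneg _) _

lemma gk_cont {s : ℝ} (hs : 0 ≤ s) : Continuous (gk d s) := by
  unfold gk; fun_prop (disch := assumption)

lemma Gf_nonneg (ε : ℝ) (η : V) (hε : 0 < ε) : 0 ≤ Gf d ε η := by
  unfold Gf; positivity

lemma Gf_le (ε : ℝ) (hε : 0 < ε) (η : V) : Gf d ε η ≤ (π / ε) ^ ((d : ℝ) / 2) := by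
  unfold Gf
  have h1 : rexp (-(‖η‖ ^ 2 / (4 * ε))) ≤ 1 := by
    rw [Real.exp_le_one_iff, neg_nonpos]; positivity
  have h2 : (0:ℝ) ≤ (π / ε) ^ ((d : ℝ) / 2) := by positivity
  nlinarith

lemma integrable_gauss {b : ℝ} (hb : 0 < b) :
    Integrable (fun v : V => rexp (-(b * ‖v‖ ^ 2))) := by
  have h := (GaussianFourier.integrable_cexp_neg_mul_sq_norm_add
    (b := (b : ℂ)) (by simpa using hb) 0 (0 : V)).norm
  convert h using 2 with v
  rw [Complex.norm_exp]
  norm_num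
  left
  norm_cast

lemma Gf_integrable {ε : ℝ} (hε : 0 < ε) : Integrable (Gf d ε) := by
  have h : ∀ η : V, Gf d ε η = (π / ε) ^ ((d : ℝ) / 2) * rexp (-((4 * ε)⁻¹ * ‖η‖ ^ 2)) := by
    intro η; rw [Gf]; congr 2; field_simp
  rw [show Gf d ε = fun η : V => (π / ε) ^ ((d : ℝ) / 2) * rexp (-((4 * ε)⁻¹ * ‖η‖ ^ 2))
    from funext h]
  exact (integrable_gauss (by positivity)).const_mul _

lemma gk_integrable {s : ℝ} (hs : 2 ≤ s) : Integrable (gk d s) := by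
  have hcont : Continuous (gk d s) := gk_cont (by linarith)
  apply Integrable.mono' ((integrable_gauss (b := 1) one_pos).const_mul (rexp 1))
    hcont.aestronglyMeasurable
  refine .of_forall fun ξ => ?_
  rw [Real.norm_eq_abs, abs_of_pos (gk_pos _ _), gk, ← Real.exp_add]
  rw [Real.exp_le_exp]
  rcases le_or_gt ‖ξ‖ 1 with h | h
  · have : (0:ℝ) ≤ ‖ξ‖ ^ s := Real.rpow_nonneg (norm_nonneg _) _
    have h2 : ‖ξ‖ ^ 2 ≤ 1 := by nlinarith [norm_nonneg ξ]
    linarith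
  · have h2 : ‖ξ‖ ^ (2:ℝ) ≤ ‖ξ‖ ^ s :=
      Real.rpow_le_rpow_of_exponent_le h.le hs
    rw [show ‖ξ‖ ^ (2:ℝ) = ‖ξ‖ ^ (2:ℕ) by rw [← Real.rpow_natCast]; norm_num] at h2
    linarith

lemma gauss_cos {b : ℝ} (hb : 0 < b) (w : V) :
    ∫ v : V, rexp (-(b * ‖v‖ ^ 2)) * Real.cos ⟪w, v⟫ = Gf d b w := by
  have hb' : (0:ℝ) < ((b : ℂ)).re := by simpa using hb
  have key := GaussianFourier.integral_cexp_neg_mul_sq_norm_add (b := (b : ℂ))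
    hb' Complex.I w
  have hint := GaussianFourier.integrable_cexp_neg_mul_sq_norm_add (b := (b : ℂ))
    hb' Complex.I w
  have hre := integral_re hint
  simp only [RCLike.re_to_complex] at hre
  rw [key] at hre
  have hL : ∀ v : V, (cexp (-(b:ℂ) * ‖v‖ ^ 2 + Complex.I * ⟪w, v⟫)).re
      = rexp (-(b * ‖v‖ ^ 2)) * Real.cos ⟪w, v⟫ := by
    intro v
    rw [Complex.exp_re]
    have h1 : (-(b:ℂ) * (‖v‖:ℂ) ^ 2 + Complex.I * (⟪w, v⟫ : ℝ)).re
        = -(b * ‖v‖ ^ 2) := by simp; left; norm_cast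
    have h2 : (-(b:ℂ) * (‖v‖:ℂ) ^ 2 + Complex.I * (⟪w, v⟫ : ℝ)).im
        = ⟪w, v⟫ := by simp; right; norm_cast
    rw [h1, h2]
  rw [integral_congr_ae (Filter.Eventually.of_forall hL)] at hre
  rw [hre, Gf]
  have h1 : ((π : ℂ) / (b : ℂ)) ^ ((Module.finrank ℝ V : ℂ) / 2)
      = (((π / b) ^ ((d : ℝ) / 2) : ℝ) : ℂ) := by
    rw [Complex.ofReal_cpow (by positivity : (0:ℝ) ≤ π / b)]
    push_cast [finrank_euclideanSpace_fin]
    norm_num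
  have h2 : (Complex.I ^ 2 * (‖w‖:ℂ) ^ 2 / (4 * (b:ℂ)))
      = ((-(‖w‖ ^ 2 / (4 * b)) : ℝ) : ℂ) := by
    rw [Complex.I_sq]
    push_cast
    ring
  rw [h1, h2, ← Complex.ofReal_exp, ← Complex.ofReal_mul, Complex.ofReal_re]

lemma gauss_cos' {b : ℝ} (hb : 0 < b) (w : V) :
    ∫ v : V, rexp (-(b * ‖v‖ ^ 2)) * Real.cos ⟪v, w⟫ = Gf d b w := by
  rw [← gauss_cos hb w]
  congr 1
  funext v
  rw [real_inner_comm]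

lemma integrable_gauss_cos {ε : ℝ} (hε : 0 < ε) (w : V) :
    Integrable (fun v : V => rexp (-(ε * ‖v‖ ^ 2)) * Real.cos ⟪v, w⟫) := by
  apply (integrable_gauss hε).mono'
  · exact (Continuous.mul (by fun_prop) (Real.continuous_cos.comp
      (continuous_inner.comp (Continuous.prodMk continuous_id (continuous_const))))
      ).aestronglyMeasurable
  · refine .of_forall fun v => ?_
    rw [Real.norm_eq_abs, abs_mul]
    calc |rexp (-(ε * ‖v‖ ^ 2))| * |Real.cos ⟪v, w⟫|
        ≤ |rexp (-(ε * ‖v‖ ^ 2))| * 1 := by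
          gcongr; exact Real.abs_cos_le_one _
      _ = rexp (-(ε * ‖v‖ ^ 2)) := by rw [mul_one, abs_of_pos (Real.exp_pos _)]

/-- The (unnormalized) kernel. -/
def Fk (d : ℕ) (s : ℝ) (x : EuclideanSpace ℝ (Fin d)) : ℝ :=
  ∫ ξ : EuclideanSpace ℝ (Fin d), gk d s ξ * Real.cos ⟪x, ξ⟫

lemma Fk_bound {s : ℝ} (hs : 2 ≤ s) (x : V) : ‖Fk d s x‖ ≤ ∫ ξ : V, gk d s ξ := by
  rw [Fk]
  calc ‖∫ ξ : V, gk d s ξ * Real.cos ⟪x, ξ⟫‖ ≤ ∫ ξ : V, ‖gk d s ξ * Real.cos ⟪x, ξ⟫‖ :=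
        norm_integral_le_integral_norm _
    _ ≤ ∫ ξ : V, gk d s ξ := by
        apply integral_mono_of_nonneg (.of_forall fun ξ => norm_nonneg _)
          (gk_integrable hs)
        refine .of_forall fun ξ => ?_
        show ‖gk d s ξ * Real.cos ⟪x, ξ⟫‖ ≤ gk d s ξ
        rw [Real.norm_eq_abs, abs_mul, abs_of_pos (gk_pos _ _)]
        calc gk d s ξ * |Real.cos ⟪x, ξ⟫| ≤ gk d s ξ * 1 := by
              gcongr
              · exact (gk_pos _ _).le
              · exact Real.abs_cos_le_one _
          _ = gk d s ξ := mul_one _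

lemma Fk_cont {s : ℝ} (hs : 2 ≤ s) : Continuous (Fk d s) := by
  apply continuous_of_dominated (bound := gk d s)
  · intro x
    exact ((gk_cont (by linarith)).mul (Real.continuous_cos.comp
      (continuous_inner.comp (Continuous.prodMk continuous_const
      continuous_id)))).aestronglyMeasurable
  · intro x
    refine .of_forall fun ξ => ?_
    rw [Real.norm_eq_abs, abs_mul, abs_of_pos (gk_pos _ _)]
    calc gk d s ξ * |Real.cos ⟪x, ξ⟫| ≤ gk d s ξ * 1 := by
          gcongr
          · exact (gk_pos _ _).le
          · exact Real.abs_cos_le_one _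
      _ = gk d s ξ := mul_one _
  · exact gk_integrable hs
  · refine .of_forall fun ξ => ?_
    exact continuous_const.mul
      (Real.continuous_cos.comp (continuous_id.inner continuous_const))


lemma Gf_cont (ε : ℝ) : Continuous (Gf d ε) := by unfold Gf; fun_prop

lemma int_gk_Gf {s ε : ℝ} (hs : 2 ≤ s) (hε : 0 < ε) (c : V) :
    Integrable (fun ξ : V => gk d s ξ * Gf d ε (ξ + c)) := by
  apply Integrable.mono' ((gk_integrable hs).const_mul ((π / ε) ^ ((d : ℝ) / 2)))
  · exact ((gk_cont (by linarith)).mul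
      ((Gf_cont ε).comp (continuous_id.add continuous_const))).aestronglyMeasurable
  · refine .of_forall fun ξ => ?_
    rw [Real.norm_eq_abs, abs_mul, abs_of_pos (gk_pos _ _), _root_.abs_of_nonneg (Gf_nonneg _ _ hε)]
    calc gk d s ξ * Gf d ε (ξ + c) ≤ gk d s ξ * ((π / ε) ^ ((d : ℝ) / 2)) := by
          gcongr
          · exact (gk_pos _ _).le
          · exact Gf_le _ hε _
      _ = (π / ε) ^ ((d : ℝ) / 2) * gk d s ξ := mul_comm _ _

lemma int_Gf_gk {s ε : ℝ} (hs : 2 ≤ s) (hε : 0 < ε) (c : V) :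
    Integrable (fun η : V => Gf d ε η * gk d s (η - c)) := by
  apply Integrable.mono' (Gf_integrable hε)
  · exact ((Gf_cont ε).mul
      ((gk_cont (by linarith)).comp (continuous_id.sub continuous_const))).aestronglyMeasurable
  · refine .of_forall fun η => ?_
    rw [Real.norm_eq_abs, abs_mul, _root_.abs_of_nonneg (Gf_nonneg _ _ hε), abs_of_pos (gk_pos _ _)]
    calc Gf d ε η * gk d s (η - c) ≤ Gf d ε η * 1 := by
          gcongr
          · exact Gf_nonneg _ _ hε
          · exact gk_le_one _ _
      _ = Gf d ε η := mul_one _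

lemma translate_eq (s ε : ℝ) (c : V) :
    ∫ ξ : V, gk d s ξ * Gf d ε (ξ + c) = ∫ η : V, Gf d ε η * gk d s (η - c) := by
  have h := integral_add_right_eq_self (μ := volume)
    (fun η : V => Gf d ε η * gk d s (η - c)) c
  rw [← h]
  congr 1
  funext ξ
  rw [add_sub_cancel_right, mul_comm]

lemma fubini_P {s ε : ℝ} (hs : 2 ≤ s) (hε : 0 < ε) (ζ : V) :
    ∫ x : V, Fk d s x * (rexp (-(ε * ‖x‖ ^ 2)) * Real.cos ⟪x, ζ⟫)
      = ∫ η : V, Gf d ε η * ((gk d s (η - ζ) + gk d s (η + ζ)) / 2) := by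
  have step1 : (fun x : V => Fk d s x * (rexp (-(ε * ‖x‖ ^ 2)) * Real.cos ⟪x, ζ⟫))
      = fun x : V => ∫ ξ : V,
          gk d s ξ * Real.cos ⟪x, ξ⟫ * (rexp (-(ε * ‖x‖ ^ 2)) * Real.cos ⟪x, ζ⟫) := by
    funext x; rw [Fk, ← integral_mul_const]
  rw [step1]
  have hint : Integrable (Function.uncurry fun (x ξ : V) =>
      gk d s ξ * Real.cos ⟪x, ξ⟫ * (rexp (-(ε * ‖x‖ ^ 2)) * Real.cos ⟪x, ζ⟫))
      (volume.prod volume) := by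
    apply Integrable.mono' ((integrable_gauss hε).mul_prod (gk_integrable hs))
    · apply Continuous.aestronglyMeasurable
      refine Continuous.mul (Continuous.mul ?_ ?_) (Continuous.mul ?_ ?_)
      · exact (gk_cont (by linarith)).comp continuous_snd
      · exact Real.continuous_cos.comp (continuous_fst.inner continuous_snd)
      · fun_prop
      · exact Real.continuous_cos.comp (continuous_fst.inner continuous_const)
    · refine .of_forall fun p => ?_
      show ‖gk d s p.2 * Real.cos ⟪p.1, p.2⟫ * (rexp (-(ε * ‖p.1‖ ^ 2)) * Real.cos ⟪p.1, ζ⟫)‖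
        ≤ rexp (-(ε * ‖p.1‖ ^ 2)) * gk d s p.2
      rw [Real.norm_eq_abs, abs_mul, abs_mul, abs_mul, abs_of_pos (gk_pos _ _),
        abs_of_pos (Real.exp_pos _)]
      calc gk d s p.2 * |Real.cos ⟪p.1, p.2⟫| * (rexp (-(ε * ‖p.1‖ ^ 2)) * |Real.cos ⟪p.1, ζ⟫|)
          ≤ gk d s p.2 * 1 * (rexp (-(ε * ‖p.1‖ ^ 2)) * 1) := by
            gcongr
            all_goals first
              | exact Real.abs_cos_le_one _
              | exact mul_nonneg (gk_pos _ _).le zero_le_one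
              | exact (gk_pos _ _).le
              | exact (Real.exp_pos _).le
              | positivity
        _ = rexp (-(ε * ‖p.1‖ ^ 2)) * gk d s p.2 := by ring
  rw [integral_integral_swap hint]
  have inner_eq : ∀ ξ : V, (∫ x : V,
        gk d s ξ * Real.cos ⟪x, ξ⟫ * (rexp (-(ε * ‖x‖ ^ 2)) * Real.cos ⟪x, ζ⟫))
      = gk d s ξ * ((Gf d ε (ξ + ζ) + Gf d ε (ξ - ζ)) / 2) := by
    intro ξ
    have hpt : ∀ x : V, gk d s ξ * Real.cos ⟪x, ξ⟫ * (rexp (-(ε * ‖x‖ ^ 2)) * Real.cos ⟪x, ζ⟫)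
        = gk d s ξ * ((rexp (-(ε * ‖x‖ ^ 2)) * Real.cos ⟪x, ξ + ζ⟫
            + rexp (-(ε * ‖x‖ ^ 2)) * Real.cos ⟪x, ξ - ζ⟫) / 2) := by
      intro x
      rw [inner_add_right, inner_sub_right, Real.cos_add, Real.cos_sub]
      ring
    simp_rw [hpt]
    rw [integral_const_mul]
    congr 1
    rw [integral_div, integral_add (integrable_gauss_cos hε _) (integrable_gauss_cos hε _),
      gauss_cos' hε, gauss_cos' hε]
  rw [integral_congr_ae (Filter.Eventually.of_forall inner_eq)]
  have lsplit : (fun ξ : V => gk d s ξ * ((Gf d ε (ξ + ζ) + Gf d ε (ξ - ζ)) / 2))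
      = fun ξ : V => (gk d s ξ * Gf d ε (ξ + ζ)) / 2 + (gk d s ξ * Gf d ε (ξ + -ζ)) / 2 := by
    funext ξ; rw [sub_eq_add_neg]; ring
  have rsplit : (fun η : V => Gf d ε η * ((gk d s (η - ζ) + gk d s (η + ζ)) / 2))
      = fun η : V => (Gf d ε η * gk d s (η - ζ)) / 2 + (Gf d ε η * gk d s (η - -ζ)) / 2 := by
    funext η; rw [sub_neg_eq_add]; ring
  rw [lsplit, rsplit,
    integral_add ((int_gk_Gf hs hε ζ).div_const 2) ((int_gk_Gf hs hε (-ζ)).div_const 2),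
    integral_add ((int_Gf_gk hs hε ζ).div_const 2) ((int_Gf_gk hs hε (-ζ)).div_const 2),
    integral_div, integral_div, integral_div, integral_div,
    translate_eq, translate_eq]

/-- The test combination on the frequency side. -/
def psik (d : ℕ) (s : ℝ) (ξ₀ η : EuclideanSpace ℝ (Fin d)) : ℝ :=
  3 * gk d s η - 2 * (gk d s (η - ξ₀) + gk d s (η + ξ₀))
    + (gk d s (η - (2:ℝ) • ξ₀) + gk d s (η + (2:ℝ) • ξ₀)) / 2

lemma psik_cont {s : ℝ} (hs : 0 ≤ s) (ξ₀ : V) : Continuous (psik d s ξ₀) := by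
  unfold psik
  have h : ∀ c : V, Continuous fun η : V => gk d s (η - c) :=
    fun c => (gk_cont hs).comp (continuous_id.sub continuous_const)
  have h' : ∀ c : V, Continuous fun η : V => gk d s (η + c) :=
    fun c => (gk_cont hs).comp (continuous_id.add continuous_const)
  exact (((continuous_const.mul (gk_cont hs)).sub
    (continuous_const.mul ((h ξ₀).add (h' ξ₀)))).add
    (((h ((2:ℝ) • ξ₀)).add (h' ((2:ℝ) • ξ₀))).div_const 2))

lemma psik_abs_le (s : ℝ) (ξ₀ η : V) : |psik d s ξ₀ η| ≤ 8 := by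
  have b1 := gk_pos (d := d) s η; have c1 := gk_le_one (d := d) s η
  have b2 := gk_pos (d := d) s (η - ξ₀); have c2 := gk_le_one (d := d) s (η - ξ₀)
  have b3 := gk_pos (d := d) s (η + ξ₀); have c3 := gk_le_one (d := d) s (η + ξ₀)
  have b4 := gk_pos (d := d) s (η - (2:ℝ) • ξ₀); have c4 := gk_le_one (d := d) s (η - (2:ℝ) • ξ₀)
  have b5 := gk_pos (d := d) s (η + (2:ℝ) • ξ₀); have c5 := gk_le_one (d := d) s (η + (2:ℝ) • ξ₀)
  rw [abs_le, psik]
  constructor <;> nlinarith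

lemma int_Fk_w {s ε : ℝ} (hs : 2 ≤ s) (hε : 0 < ε) (ζ : V) :
    Integrable (fun x : V => Fk d s x * (rexp (-(ε * ‖x‖ ^ 2)) * Real.cos ⟪x, ζ⟫)) := by
  apply Integrable.mono' ((integrable_gauss hε).const_mul (∫ ξ : V, gk d s ξ))
  · exact ((Fk_cont hs).mul ((by fun_prop : Continuous fun x : V =>
      rexp (-(ε * ‖x‖ ^ 2))).mul
      (Real.continuous_cos.comp (continuous_id.inner continuous_const)))).aestronglyMeasurable
  · refine .of_forall fun x => ?_
    rw [Real.norm_eq_abs, abs_mul, abs_mul]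
    have hFb : |Fk d s x| ≤ ∫ ξ : V, gk d s ξ := by
      have := Fk_bound hs x; rwa [Real.norm_eq_abs] at this
    calc |Fk d s x| * (|rexp (-(ε * ‖x‖ ^ 2))| * |Real.cos ⟪x, ζ⟫|)
        ≤ (∫ ξ : V, gk d s ξ) * (|rexp (-(ε * ‖x‖ ^ 2))| * 1) := by
          gcongr
          all_goals first
            | exact hFb
            | exact Real.abs_cos_le_one _
            | exact abs_nonneg _
            | exact integral_nonneg fun ξ => (gk_pos _ _).le
            | positivity
      _ = (∫ ξ : V, gk d s ξ) * rexp (-(ε * ‖x‖ ^ 2)) := by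
          rw [mul_one, _root_.abs_of_pos (Real.exp_pos _)]

lemma int_Gf_pair {s ε : ℝ} (hs : 2 ≤ s) (hε : 0 < ε) (ζ : V) :
    Integrable (fun η : V => Gf d ε η * ((gk d s (η - ζ) + gk d s (η + ζ)) / 2)) := by
  refine (((int_Gf_gk hs hε ζ).add (int_Gf_gk hs hε (-ζ))).div_const 2).congr
    (.of_forall fun η => ?_)
  simp only [Pi.add_apply, sub_neg_eq_add]
  ring

lemma D_eq {s ε : ℝ} (hs : 2 ≤ s) (hε : 0 < ε) (ξ₀ : V) :
    ∫ x : V, Fk d s x * (rexp (-(ε * ‖x‖ ^ 2)) *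
        (3 - 4 * Real.cos ⟪x, ξ₀⟫ + Real.cos ⟪x, (2:ℝ) • ξ₀⟫))
      = ∫ η : V, Gf d ε η * psik d s ξ₀ η := by
  have hL : (fun x : V => Fk d s x * (rexp (-(ε * ‖x‖ ^ 2)) *
        (3 - 4 * Real.cos ⟪x, ξ₀⟫ + Real.cos ⟪x, (2:ℝ) • ξ₀⟫)))
      = fun x : V => (3 * (Fk d s x * (rexp (-(ε * ‖x‖ ^ 2)) * Real.cos ⟪x, (0:V)⟫))
          - 4 * (Fk d s x * (rexp (-(ε * ‖x‖ ^ 2)) * Real.cos ⟪x, ξ₀⟫)))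
          + Fk d s x * (rexp (-(ε * ‖x‖ ^ 2)) * Real.cos ⟪x, (2:ℝ) • ξ₀⟫) := by
    funext x
    rw [inner_zero_right, Real.cos_zero]
    ring
  have e1 : Integrable (fun x : V =>
      3 * (Fk d s x * (rexp (-(ε * ‖x‖ ^ 2)) * Real.cos ⟪x, (0:V)⟫))
        - 4 * (Fk d s x * (rexp (-(ε * ‖x‖ ^ 2)) * Real.cos ⟪x, ξ₀⟫))) :=
    ((int_Fk_w hs hε 0).const_mul 3).sub ((int_Fk_w hs hε ξ₀).const_mul 4)
  rw [hL, integral_add e1 (int_Fk_w hs hε ((2:ℝ) • ξ₀)),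
    integral_sub ((int_Fk_w hs hε 0).const_mul 3) ((int_Fk_w hs hε ξ₀).const_mul 4),
    integral_const_mul, integral_const_mul,
    fubini_P hs hε 0, fubini_P hs hε ξ₀, fubini_P hs hε ((2:ℝ) • ξ₀)]
  have hR : (fun η : V => Gf d ε η * psik d s ξ₀ η)
      = fun η : V => (3 * (Gf d ε η * ((gk d s (η - 0) + gk d s (η + 0)) / 2))
          - 4 * (Gf d ε η * ((gk d s (η - ξ₀) + gk d s (η + ξ₀)) / 2)))
          + Gf d ε η * ((gk d s (η - (2:ℝ) • ξ₀) + gk d s (η + (2:ℝ) • ξ₀)) / 2) := by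
    funext η
    rw [psik, sub_zero, add_zero]
    ring
  have e2 : Integrable (fun η : V =>
      3 * (Gf d ε η * ((gk d s (η - 0) + gk d s (η + 0)) / 2))
        - 4 * (Gf d ε η * ((gk d s (η - ξ₀) + gk d s (η + ξ₀)) / 2))) :=
    ((int_Gf_pair hs hε 0).const_mul 3).sub ((int_Gf_pair hs hε ξ₀).const_mul 4)
  rw [hR, integral_add e2 (int_Gf_pair hs hε ((2:ℝ) • ξ₀)),
    integral_sub ((int_Gf_pair hs hε 0).const_mul 3) ((int_Gf_pair hs hε ξ₀).const_mul 4),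
    integral_const_mul, integral_const_mul]

lemma D_nonneg {s ε : ℝ} (hF : ∀ x : V, 0 ≤ Fk d s x) (hε : 0 < ε) (ξ₀ : V) :
    0 ≤ ∫ x : V, Fk d s x * (rexp (-(ε * ‖x‖ ^ 2)) *
        (3 - 4 * Real.cos ⟪x, ξ₀⟫ + Real.cos ⟪x, (2:ℝ) • ξ₀⟫)) := by
  apply integral_nonneg
  intro x
  apply mul_nonneg (hF x)
  apply mul_nonneg (Real.exp_pos _).le
  have h2 : (⟪x, (2:ℝ) • ξ₀⟫ : ℝ) = 2 * ⟪x, ξ₀⟫ := real_inner_smul_right x ξ₀ 2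
  rw [h2, Real.cos_two_mul]
  nlinarith [Real.cos_le_one (⟪x, ξ₀⟫ : ℝ), Real.neg_one_le_cos (⟪x, ξ₀⟫ : ℝ),
    sq_nonneg (1 - Real.cos (⟪x, ξ₀⟫ : ℝ))]

lemma scaling {s ε r : ℝ} (hε : 0 < ε) (hr : 0 < r) (hrε : r ^ 2 = 4 * ε) (ξ₀ : V) :
    ∫ η : V, Gf d ε η * psik d s ξ₀ η
      = (r ^ d * (π / ε) ^ ((d : ℝ) / 2)) *
          ∫ ζ : V, rexp (-(‖ζ‖ ^ 2)) * psik d s ξ₀ (r • ζ) := by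
  have h := MeasureTheory.Measure.integral_comp_smul (μ := volume)
    (fun η : V => Gf d ε η * psik d s ξ₀ η) r
  rw [finrank_euclideanSpace_fin] at h
  have hpt : ∀ x : V, Gf d ε (r • x) * psik d s ξ₀ (r • x)
      = (π / ε) ^ ((d : ℝ) / 2) * (rexp (-(‖x‖ ^ 2)) * psik d s ξ₀ (r • x)) := by
    intro x
    rw [Gf, norm_smul, Real.norm_eq_abs, _root_.abs_of_pos hr, mul_pow, ← hrε]
    have hr2 : (r:ℝ) ^ 2 ≠ 0 := by positivity
    rw [show r ^ 2 * ‖x‖ ^ 2 / r ^ 2 = ‖x‖ ^ 2 from by field_simp]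
    ring
  rw [integral_congr_ae (Filter.Eventually.of_forall hpt), integral_const_mul,
    smul_eq_mul, _root_.abs_of_pos (by positivity : (0:ℝ) < ((r:ℝ) ^ d)⁻¹)] at h
  have hrd : (r : ℝ) ^ d ≠ 0 := by positivity
  field_simp at h
  rw [← h]
  ring

lemma combo_neg {c : ℝ} (hc : 4 < c) :
    3 - 4 * rexp (-((c - 4) / (8 * c))) + rexp (-(c * ((c - 4) / (8 * c)))) < 0 := by
  set u : ℝ := (c - 4) / (8 * c) with hu
  have hc0 : (0:ℝ) < c := by linarith
  have hu0 : 0 < u := div_pos (by linarith) (by linarith)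
  have e1 : 1 - u ≤ rexp (-u) := by
    have := Real.add_one_le_exp (-u); linarith
  have hcu : (0:ℝ) < 1 + c * u := by positivity
  have e2 : rexp (-(c * u)) ≤ (1 + c * u)⁻¹ := by
    rw [Real.exp_neg]
    have h2 : 1 + c * u ≤ rexp (c * u) := by
      have := Real.add_one_le_exp (c * u); linarith
    exact inv_anti₀ hcu h2
  have h1cu : 1 + c * u = (c + 4) / 8 := by
    rw [hu]; field_simp; ring
  have hinv : (1 + c * u)⁻¹ = 8 / (c + 4) := by rw [h1cu, inv_div]
  have h4u : 4 * u = (c - 4) / (2 * c) := by rw [hu]; field_simp; ring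
  have hfrac : (c - 4) / (2 * c) + 8 / (c + 4) < 1 := by
    rw [div_add_div _ _ (by positivity : (2*c) ≠ 0) (by positivity : (c+4) ≠ 0),
      div_lt_one (by positivity)]
    nlinarith [sq_nonneg (c - 4)]
  have key : 3 - 4 * (1 - u) + (1 + c * u)⁻¹ < 0 := by
    rw [hinv, show 3 - 4 * (1 - u) = -1 + 4 * u by ring, h4u]
    linarith
  linarith

lemma psik_zero {s : ℝ} (hs0 : 0 < s) (ξ₀ : V) :
    psik d s ξ₀ 0 = 3 - 4 * rexp (-(‖ξ₀‖ ^ s)) + rexp (-(‖(2:ℝ) • ξ₀‖ ^ s)) := by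
  rw [psik, zero_sub, zero_add, zero_sub, zero_add]
  simp only [gk, norm_neg, norm_zero, Real.zero_rpow hs0.ne', neg_zero, Real.exp_zero]
  ring

theorem stmt_10 (d : ℕ) (hd : 1 ≤ d) (s : ℝ) (hs : 2 < s) :
    ∃ x : EuclideanSpace ℝ (Fin d),
      (1 / (2 * Real.pi) ^ d) *
        (∫ ξ : EuclideanSpace ℝ (Fin d),
          Real.exp (-(‖ξ‖ ^ s)) * Real.cos ((inner ℝ x ξ : ℝ))) < 0 := by
  by_contra hcon
  push_neg at hcon
  have hs2 : 2 ≤ s := hs.le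
  have hs0 : (0:ℝ) < s := by linarith
  have hF : ∀ x : EuclideanSpace ℝ (Fin d), 0 ≤ Fk d s x := by
    intro x
    have h := hcon x
    have hpos : (0:ℝ) < 1 / (2 * π) ^ d := by positivity
    have heq : (∫ ξ : EuclideanSpace ℝ (Fin d),
        Real.exp (-(‖ξ‖ ^ s)) * Real.cos ((inner ℝ x ξ : ℝ))) = Fk d s x := rfl
    rw [heq] at h
    by_contra hneg
    push_neg at hneg
    have : 1 / (2 * π) ^ d * Fk d s x < 0 := mul_neg_of_pos_of_neg hpos hneg
    linarith
  set c : ℝ := (2:ℝ) ^ s with hcdef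
  have hc : 4 < c := by
    have h4 : ((2:ℝ)) ^ (2:ℝ) = 4 := by
      rw [show (2:ℝ) = ((2:ℕ):ℝ) by norm_num, Real.rpow_natCast]; norm_num
    calc (4:ℝ) = (2:ℝ) ^ (2:ℝ) := h4.symm
      _ < (2:ℝ) ^ s := (Real.rpow_lt_rpow_left_iff (by norm_num)).mpr hs
  set u : ℝ := (c - 4) / (8 * c) with hudef
  have hu0 : 0 < u := div_pos (by linarith) (by linarith)
  set t : ℝ := u ^ s⁻¹ with htdef
  have ht0 : 0 < t := Real.rpow_pos_of_pos hu0 _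
  have hts : t ^ s = u := by
    rw [htdef, ← Real.rpow_mul hu0.le, inv_mul_cancel₀ hs0.ne', Real.rpow_one]
  set i : Fin d := ⟨0, hd⟩
  set ξ₀ : EuclideanSpace ℝ (Fin d) := t • EuclideanSpace.single i (1:ℝ) with hxi
  have hnorm : ‖ξ₀‖ = t := by
    rw [hxi, norm_smul, EuclideanSpace.norm_single, norm_one, mul_one,
      Real.norm_eq_abs, _root_.abs_of_pos ht0]
  have hnorm2 : ‖(2:ℝ) • ξ₀‖ = 2 * t := by
    rw [norm_smul, hnorm, Real.norm_eq_abs]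
    norm_num
  have hpsi0 : psik d s ξ₀ 0 < 0 := by
    rw [psik_zero hs0, hnorm, hnorm2,
      Real.mul_rpow (by norm_num : (0:ℝ) ≤ 2) ht0.le, hts, ← hcdef]
    exact combo_neg hc
  have hgauss : Integrable (fun ζ : EuclideanSpace ℝ (Fin d) => rexp (-(‖ζ‖ ^ 2))) := by
    have h := integrable_gauss (d := d) (b := 1) one_pos
    simpa using h
  have hgpos : 0 < ∫ ζ : EuclideanSpace ℝ (Fin d), rexp (-(‖ζ‖ ^ 2)) := by
    have heq : (fun ζ : EuclideanSpace ℝ (Fin d) => rexp (-(‖ζ‖ ^ 2)))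
        = fun ζ : EuclideanSpace ℝ (Fin d) => rexp (-(1 * ‖ζ‖ ^ 2)) := by
      funext ζ; rw [one_mul]
    rw [heq, show (fun ζ : EuclideanSpace ℝ (Fin d) => rexp (-(1 * ‖ζ‖ ^ 2)))
      = fun ζ : EuclideanSpace ℝ (Fin d) => rexp (-1 * ‖ζ‖ ^ 2) from funext fun ζ => by ring_nf]
    rw [GaussianFourier.integral_rexp_neg_mul_sq_norm one_pos]
    positivity
  set r : ℕ → ℝ := fun n => 1 / ((n : ℝ) + 1) with hrdef
  have hr0 : ∀ n, 0 < r n := fun n => by positivity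
  set εs : ℕ → ℝ := fun n => (r n) ^ 2 / 4 with hedef
  have he0 : ∀ n, 0 < εs n := fun n => by positivity
  have hre : ∀ n, (r n) ^ 2 = 4 * εs n := fun n => by rw [hedef]; ring
  set J : ℕ → ℝ := fun n =>
    ∫ ζ : EuclideanSpace ℝ (Fin d), rexp (-(‖ζ‖ ^ 2)) * psik d s ξ₀ ((r n) • ζ) with hJ
  have hJnn : ∀ n, 0 ≤ J n := by
    intro n
    have hD := D_nonneg hF (he0 n) ξ₀
    rw [D_eq hs2 (he0 n) ξ₀, scaling (he0 n) (hr0 n) (hre n) ξ₀] at hD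
    have hC : 0 < (r n) ^ d * (π / εs n) ^ ((d:ℝ)/2) := by
      have := hr0 n; have := he0 n; positivity
    by_contra hneg
    push_neg at hneg
    nlinarith
  have hlim : Tendsto J atTop
      (𝓝 ((∫ ζ : EuclideanSpace ℝ (Fin d), rexp (-(‖ζ‖ ^ 2))) * psik d s ξ₀ 0)) := by
    rw [show (∫ ζ : EuclideanSpace ℝ (Fin d), rexp (-(‖ζ‖ ^ 2))) * psik d s ξ₀ 0
      = ∫ ζ : EuclideanSpace ℝ (Fin d), rexp (-(‖ζ‖ ^ 2)) * psik d s ξ₀ 0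
      from (integral_mul_const _ _).symm]
    apply tendsto_integral_of_dominated_convergence
      (bound := fun ζ : EuclideanSpace ℝ (Fin d) => 8 * rexp (-(‖ζ‖ ^ 2)))
    · intro n
      exact ((by fun_prop : Continuous fun ζ : EuclideanSpace ℝ (Fin d) =>
        rexp (-(‖ζ‖ ^ 2))).mul ((psik_cont hs0.le ξ₀).comp
        (continuous_id.const_smul (r n)))).aestronglyMeasurable
    · exact hgauss.const_mul 8
    · intro n
      refine .of_forall fun ζ => ?_
      rw [Real.norm_eq_abs, abs_mul, _root_.abs_of_pos (Real.exp_pos _)]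
      calc rexp (-(‖ζ‖ ^ 2)) * |psik d s ξ₀ ((r n) • ζ)|
          ≤ rexp (-(‖ζ‖ ^ 2)) * 8 := by
            gcongr
            all_goals first
              | exact psik_abs_le _ _ _
              | exact (Real.exp_pos _).le
        _ = 8 * rexp (-(‖ζ‖ ^ 2)) := mul_comm _ _
    · refine .of_forall fun ζ => ?_
      have h1 : Tendsto (fun n : ℕ => r n) atTop (𝓝 0) := by
        rw [hrdef]
        exact tendsto_one_div_add_atTop_nhds_zero_nat
      have h2 : Tendsto (fun n : ℕ => (r n) • ζ) atTop (𝓝 ((0:ℝ) • ζ)) :=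
        h1.smul_const ζ
      rw [zero_smul] at h2
      have h3 := ((psik_cont hs0.le ξ₀).tendsto 0).comp h2
      exact tendsto_const_nhds.mul h3
  have hlimneg : (∫ ζ : EuclideanSpace ℝ (Fin d), rexp (-(‖ζ‖ ^ 2))) * psik d s ξ₀ 0 < 0 :=
    mul_neg_of_pos_of_neg hgpos hpsi0
  have hge := ge_of_tendsto' hlim hJnn
  linarith
end
end

section
/- Let d ≥ 1, let K : ℝ^d → [0, ∞) be integrable with ∫_{ℝ^d} K dx = 1, and let p ∈ (1, 2]. Then for every f ∈ L^p(ℝ^d) (complex-valued), ‖K * f‖_{L^p(ℝ^d)} ≤ ‖K * (|f|^{p/2})‖_{L²(ℝ^d)}^{2(p−1)/p} · ‖f‖_{L^p(ℝ^d)}^{2−p}, where * denotes convolution, (K*f)(x) = ∫_{ℝ^d} K(x−y) f(y) dy. -/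
open MeasureTheory
open scoped ENNReal

private lemma hoelder_aux {α : Type*} [MeasurableSpace α] (μ : Measure α)
    {u v : α → ℝ≥0∞} (hu : AEMeasurable u μ) (hv : AEMeasurable v μ)
    {a b : ℝ} (ha : 0 < a) (hb : 0 ≤ b) (hab : a + b = 1) :
    ∫⁻ x, (u x) ^ a * (v x) ^ b ∂μ ≤ (∫⁻ x, u x ∂μ) ^ a * (∫⁻ x, v x ∂μ) ^ b := by
  rcases hb.eq_or_lt with hb0 | hb0
  · have ha1 : a = 1 := by linarith
    simp [← hb0, ha1]
  · have ha1 : a < 1 := by linarith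
    have hpq : (1/a).HolderConjugate (1/b) := by
      rw [Real.holderConjugate_iff]
      constructor
      · exact one_lt_one_div ha ha1
      · simp only [one_div, inv_inv]; exact hab
    have h := ENNReal.lintegral_mul_le_Lp_mul_Lq μ hpq
      (hu.pow_const a) (hv.pow_const b)
    simp only [Pi.mul_apply] at h
    have e1 : ∀ x, (u x ^ a) ^ (1/a) = u x := by
      intro x
      rw [← ENNReal.rpow_mul, mul_one_div, div_self ha.ne']
      exact ENNReal.rpow_one _
    have e2 : ∀ x, (v x ^ b) ^ (1/b) = v x := by
      intro x
      rw [← ENNReal.rpow_mul, mul_one_div, div_self hb0.ne']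
      exact ENNReal.rpow_one _
    calc ∫⁻ x, (u x) ^ a * (v x) ^ b ∂μ
        ≤ (∫⁻ x, (u x ^ a) ^ (1/a) ∂μ) ^ (1/(1/a)) * (∫⁻ x, (v x ^ b) ^ (1/b) ∂μ) ^ (1/(1/b)) := h
      _ = (∫⁻ x, u x ∂μ) ^ a * (∫⁻ x, v x ∂μ) ^ b := by
          simp_rw [e1, e2, one_div_one_div]

theorem stmt_16 (d : ℕ) (hd : 1 ≤ d) (K : (Fin d → ℝ) → ℝ)
    (hK0 : ∀ x, 0 ≤ K x) (hKi : Integrable K) (hK1 : (∫ x, K x) = 1)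
    (p : ℝ) (hp1 : 1 < p) (hp2 : p ≤ 2)
    (f : (Fin d → ℝ) → ℂ) (hf : MemLp f (ENNReal.ofReal p)) :
    eLpNorm (fun x => ∫ y, (K (x - y) : ℂ) * f y) (ENNReal.ofReal p) volume ≤
      (eLpNorm (fun x => ∫ y, K (x - y) * ‖f y‖ ^ (p / 2)) 2 volume) ^ (2 * (p - 1) / p) *
        (eLpNorm f (ENNReal.ofReal p) volume) ^ (2 - p) := by
  have hp0 : (0:ℝ) < p := lt_trans one_pos hp1
  set p' : ℝ≥0∞ := ENNReal.ofReal p with hp'def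
  have hp'top : p' ≠ ∞ := ENNReal.ofReal_ne_top
  have hp'0 : p' ≠ 0 := by
    simp only [hp'def, ne_eq, ENNReal.ofReal_eq_zero, not_le]; exact hp0
  have hp't : p'.toReal = p := ENNReal.toReal_ofReal hp0.le
  -- measurable representatives
  have hKaem : AEMeasurable K volume := hKi.1.aemeasurable
  set Km : (Fin d → ℝ) → ℝ := fun z => max (hKaem.mk K z) 0 with hKmdef
  have hKm : Measurable Km := hKaem.measurable_mk.max measurable_const
  have hKm0 : ∀ z, 0 ≤ Km z := fun z => le_max_right _ _
  have hKKm : K =ᵐ[volume] Km := by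
    filter_upwards [hKaem.ae_eq_mk] with z hz
    rw [hKmdef]; simp only [← hz, max_eq_left (hK0 z)]
  have hfaem : AEMeasurable f volume := hf.1.aemeasurable
  set fm : (Fin d → ℝ) → ℂ := hfaem.mk f with hfmdef
  have hfm : Measurable fm := hfaem.measurable_mk
  have hffm : f =ᵐ[volume] fm := hfaem.ae_eq_mk
  -- ENNReal versions
  set A : (Fin d → ℝ) → ℝ≥0∞ := fun z => ENNReal.ofReal (Km z) with hAdef
  have hA : Measurable A := ENNReal.measurable_ofReal.comp hKm
  set φ : (Fin d → ℝ) → ℝ≥0∞ := fun y => (‖fm y‖₊ : ℝ≥0∞) with hφdef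
  have hφ : Measurable φ := hfm.nnnorm.coe_nnreal_ennreal
  have hAxm : ∀ x : Fin d → ℝ, Measurable fun y : Fin d → ℝ => A (x - y) :=
    fun x => hA.comp (measurable_const.sub measurable_id)
  have hAym : ∀ y : Fin d → ℝ, Measurable fun x : Fin d → ℝ => A (x - y) :=
    fun y => hA.comp (measurable_id.sub measurable_const)
  -- replace K, f by representatives everywhere
  have hKxy : ∀ x : Fin d → ℝ, (fun y => K (x - y)) =ᵐ[volume] (fun y => Km (x - y)) := by
    intro x
    exact (Measure.measurePreserving_sub_left volume x).quasiMeasurePreserving.ae_eq_comp hKKm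
  have conv_eq : (fun x => ∫ y, (K (x - y) : ℂ) * f y)
      = fun x => ∫ y, (Km (x - y) : ℂ) * fm y := by
    funext x
    refine integral_congr_ae ?_
    filter_upwards [hKxy x, hffm] with y h1 h2
    rw [h1, h2]
  have conv2_eq : (fun x => ∫ y, K (x - y) * ‖f y‖ ^ (p / 2))
      = fun x => ∫ y, Km (x - y) * ‖fm y‖ ^ (p / 2) := by
    funext x
    refine integral_congr_ae ?_
    filter_upwards [hKxy x, hffm] with y h1 h2
    rw [h1, h2]
  rw [conv_eq, conv2_eq, eLpNorm_congr_ae hffm]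
  -- main objects
  set T : (Fin d → ℝ) → ℝ≥0∞ := fun x => ∫⁻ y, A (x - y) * φ y with hTdef
  set G : (Fin d → ℝ) → ℝ≥0∞ := fun x => ∫⁻ y, A (x - y) * φ y ^ (p/2) with hGdef
  set H : (Fin d → ℝ) → ℝ≥0∞ := fun x => ∫⁻ y, A (x - y) * φ y ^ p with hHdef
  have hGm : Measurable G := by
    apply Measurable.lintegral_prod_right' (f := fun q : ((Fin d → ℝ) × (Fin d → ℝ)) =>
      A (q.1 - q.2) * φ q.2 ^ (p/2))
    exact (hA.comp (measurable_fst.sub measurable_snd)).mul ((hφ.comp measurable_snd).pow_const _)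
  have hHm : Measurable H := by
    apply Measurable.lintegral_prod_right' (f := fun q : ((Fin d → ℝ) × (Fin d → ℝ)) =>
      A (q.1 - q.2) * φ q.2 ^ p)
    exact (hA.comp (measurable_fst.sub measurable_snd)).mul ((hφ.comp measurable_snd).pow_const _)
  -- integral of A is 1
  have hAint : ∫⁻ z, A z = 1 := by
    have h1 : ∫⁻ z, A z = ∫⁻ z, ENNReal.ofReal (K z) := by
      refine lintegral_congr_ae ?_
      filter_upwards [hKKm] with z hz
      simp only [hAdef, hz]
    rw [h1, ← ofReal_integral_eq_lintegral_ofReal hKi (Filter.Eventually.of_forall hK0), hK1,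
      ENNReal.ofReal_one]
  -- Tonelli
  have tonelli : ∀ (ψ : (Fin d → ℝ) → ℝ≥0∞), Measurable ψ →
      (∫⁻ x, ∫⁻ y, A (x - y) * ψ y) = ∫⁻ y, ψ y := by
    intro ψ hψ
    rw [lintegral_lintegral_swap]
    · have inner : ∀ y : Fin d → ℝ, (∫⁻ x, A (x - y) * ψ y) = ψ y := by
        intro y
        rw [lintegral_mul_const _ (hAym y),
          (measurePreserving_sub_right volume y).lintegral_comp hA, hAint, one_mul]
      simp_rw [inner]
    · exact ((hA.comp (measurable_fst.sub measurable_snd)).mul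
        (hψ.comp measurable_snd)).aemeasurable
  -- A(x - ·) has integral 1 for each x
  have hAx1 : ∀ x : Fin d → ℝ, (∫⁻ y, A (x - y)) = 1 := by
    intro x
    rw [(Measure.measurePreserving_sub_left volume x).lintegral_comp hA, hAint]
  set Np : ℝ≥0∞ := ∫⁻ y, φ y ^ p with hNpdef
  have hHint : ∫⁻ x, H x = Np := tonelli _ (hφ.pow_const p)
  have heLp_fm : eLpNorm fm p' volume = Np ^ (1/p) := by
    rw [eLpNorm_eq_lintegral_rpow_enorm_toReal hp'0 hp'top, hp't]; rfl
  have hNp_lt : Np < ∞ := by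
    have h2 : eLpNorm fm p' volume < ∞ := by
      rw [← eLpNorm_congr_ae hffm]; exact hf.2
    rw [heLp_fm] at h2
    by_contra h
    push_neg at h
    rw [top_le_iff.mp h, ENNReal.top_rpow_of_pos (one_div_pos.mpr hp0)] at h2
    exact absurd h2 (lt_irrefl _)
  -- exponents
  set a : ℝ := 2*(p-1)/p with hadef
  set b : ℝ := (2-p)/p with hbdef
  have ha : 0 < a := by rw [hadef]; exact div_pos (by linarith) hp0
  have hb : 0 ≤ b := by rw [hbdef]; exact div_nonneg (by linarith) hp0.le
  have hab : a + b = 1 := by rw [hadef, hbdef]; field_simp; ring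
  -- step 1: pointwise Hölder
  have step1 : ∀ x, T x ≤ G x ^ a * H x ^ b := by
    intro x
    have hu : AEMeasurable (fun y => A (x - y) * φ y ^ (p/2)) volume :=
      ((hAxm x).mul (hφ.pow_const _)).aemeasurable
    have hv : AEMeasurable (fun y => A (x - y) * φ y ^ p) volume :=
      ((hAxm x).mul (hφ.pow_const _)).aemeasurable
    have key := hoelder_aux volume hu hv ha hb hab
    have ptwise : ∀ y, A (x - y) * φ y
        = (A (x - y) * φ y ^ (p/2)) ^ a * (A (x - y) * φ y ^ p) ^ b := by
      intro y
      rw [ENNReal.mul_rpow_of_nonneg _ _ ha.le, ENNReal.mul_rpow_of_nonneg _ _ hb,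
        mul_mul_mul_comm, ← ENNReal.rpow_add_of_nonneg _ _ ha.le hb, hab, ENNReal.rpow_one,
        ← ENNReal.rpow_mul, ← ENNReal.rpow_mul,
        ← ENNReal.rpow_add_of_nonneg _ _ (by positivity) (by positivity)]
      have : p/2*a + p*b = 1 := by rw [hadef, hbdef]; field_simp; ring
      rw [this, ENNReal.rpow_one]
    calc T x = ∫⁻ y, (A (x - y) * φ y ^ (p/2)) ^ a * (A (x - y) * φ y ^ p) ^ b := by
          rw [hTdef]; exact lintegral_congr fun y => ptwise y
      _ ≤ G x ^ a * H x ^ b := key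
  -- step 2
  have hab2 : (p - 1) + (2 - p) = 1 := by ring
  have hp1' : (0:ℝ) < p - 1 := by linarith
  have h2p' : (0:ℝ) ≤ 2 - p := by linarith
  set X : ℝ≥0∞ := ∫⁻ x, G x ^ (2:ℝ) with hXdef
  have step2 : ∫⁻ x, T x ^ p ≤ X ^ (p-1) * Np ^ (2-p) := by
    calc ∫⁻ x, T x ^ p ≤ ∫⁻ x, (G x ^ a * H x ^ b) ^ p :=
          lintegral_mono fun x => ENNReal.rpow_le_rpow (step1 x) hp0.le
      _ = ∫⁻ x, (G x ^ (2:ℝ)) ^ (p-1) * (H x) ^ (2-p) := by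
          refine lintegral_congr fun x => ?_
          rw [ENNReal.mul_rpow_of_nonneg _ _ hp0.le, ← ENNReal.rpow_mul, ← ENNReal.rpow_mul,
            ← ENNReal.rpow_mul]
          congr 1
          · congr 1
            rw [hadef]; field_simp; try ring
          · congr 1
            rw [hbdef]; field_simp; try ring
      _ ≤ (∫⁻ x, G x ^ (2:ℝ)) ^ (p-1) * (∫⁻ x, H x) ^ (2-p) :=
          hoelder_aux volume (hGm.pow_const _).aemeasurable hHm.aemeasurable hp1' h2p' hab2
      _ = X ^ (p-1) * Np ^ (2-p) := by rw [hHint]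
  have hG2 : ∀ x, G x ^ (2:ℝ) ≤ H x := by
    intro x
    have hu : AEMeasurable (fun y => A (x - y)) volume :=
      (hAxm x).aemeasurable
    have hv : AEMeasurable (fun y => A (x - y) * φ y ^ p) volume :=
      ((hAxm x).mul (hφ.pow_const _)).aemeasurable
    have key := hoelder_aux volume hu hv (a := 1/2) (b := 1/2) (by norm_num) (by norm_num)
      (by norm_num)
    have ptwise : ∀ y, A (x - y) * φ y ^ (p/2)
        = (A (x - y)) ^ ((1:ℝ)/2) * (A (x - y) * φ y ^ p) ^ ((1:ℝ)/2) := by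
      intro y
      rw [ENNReal.mul_rpow_of_nonneg _ _ (by norm_num : (0:ℝ) ≤ 1/2), ← mul_assoc,
        ← ENNReal.rpow_add_of_nonneg _ _ (by norm_num : (0:ℝ) ≤ 1/2) (by norm_num : (0:ℝ) ≤ 1/2),
        ← ENNReal.rpow_mul, mul_one_div,
        (by norm_num : (1:ℝ)/2 + 1/2 = 1), ENNReal.rpow_one]
    have hGle : G x ≤ (H x) ^ ((1:ℝ)/2) := by
      have h1 : G x = ∫⁻ y, (A (x - y)) ^ ((1:ℝ)/2) * (A (x - y) * φ y ^ p) ^ ((1:ℝ)/2) := by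
        rw [hGdef]; exact lintegral_congr fun y => ptwise y
      rw [h1]
      calc _ ≤ (∫⁻ y, A (x - y)) ^ ((1:ℝ)/2) * (∫⁻ y, A (x - y) * φ y ^ p) ^ ((1:ℝ)/2) := key
        _ = (H x) ^ ((1:ℝ)/2) := by rw [hAx1 x, ENNReal.one_rpow, one_mul]
    calc G x ^ (2:ℝ) ≤ ((H x) ^ ((1:ℝ)/2)) ^ (2:ℝ) :=
          ENNReal.rpow_le_rpow hGle (by norm_num)
      _ = H x := by rw [← ENNReal.rpow_mul]; norm_num
  have hXle : X ≤ Np := by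
    rw [hXdef, ← hHint]
    exact lintegral_mono hG2
  have hXlt : X < ∞ := lt_of_le_of_lt hXle hNp_lt
  have hGae : ∀ᵐ x, G x < ∞ := by
    have h := ae_lt_top (hGm.pow_const (2:ℝ)) hXlt.ne
    filter_upwards [h] with x hx
    rw [← ENNReal.rpow_lt_top_iff_of_pos (by norm_num : (0:ℝ) < 2)]
    exact hx
  -- identify eLpNorm of the real convolution with X^(1/2)
  have conv2_norm : eLpNorm (fun x => ∫ y, Km (x - y) * ‖fm y‖ ^ (p/2)) 2 volume
      = X ^ ((1:ℝ)/2) := by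
    rw [eLpNorm_eq_lintegral_rpow_enorm_toReal (by norm_num) (by norm_num), hXdef,
      (by norm_num : ((2:ℝ≥0∞)).toReal = (2:ℝ))]
    congr 1
    refine lintegral_congr_ae ?_
    filter_upwards [hGae] with x hx
    have hnn : ∀ y, 0 ≤ Km (x - y) * ‖fm y‖ ^ (p/2) := fun y =>
      mul_nonneg (hKm0 _) (Real.rpow_nonneg (norm_nonneg _) _)
    have hmeas : AEStronglyMeasurable (fun y => Km (x - y) * ‖fm y‖ ^ (p/2)) volume :=
      ((hKm.comp (measurable_const.sub measurable_id)).mul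
        (hfm.norm.pow_const _)).aestronglyMeasurable
    have hlin : ∫⁻ y, ENNReal.ofReal (Km (x - y) * ‖fm y‖ ^ (p/2)) = G x := by
      refine lintegral_congr fun y => ?_
      rw [ENNReal.ofReal_mul (hKm0 _), ← ENNReal.ofReal_rpow_of_nonneg (norm_nonneg _)
        (by linarith : (0:ℝ) ≤ p/2), ofReal_norm_eq_enorm]; rfl
    have key : ENNReal.ofReal (∫ y, Km (x - y) * ‖fm y‖ ^ (p/2)) = G x := by
      rw [integral_eq_lintegral_of_nonneg_ae (Filter.Eventually.of_forall hnn) hmeas, hlin,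
        ENNReal.ofReal_toReal hx.ne]
    have hnn2 : 0 ≤ ∫ y, Km (x - y) * ‖fm y‖ ^ (p/2) := integral_nonneg hnn
    rw [← Real.enorm_eq_ofReal hnn2] at key
    rw [key]
  -- Step 0 : bound eLpNorm of the complex convolution
  have step0 : eLpNorm (fun x => ∫ y, (Km (x - y) : ℂ) * fm y) p' volume
      ≤ (∫⁻ x, T x ^ p) ^ (1/p) := by
    rw [eLpNorm_eq_lintegral_rpow_enorm_toReal hp'0 hp'top, hp't]
    refine ENNReal.rpow_le_rpow ?_ (one_div_nonneg.mpr hp0.le)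
    refine lintegral_mono fun x => ?_
    refine ENNReal.rpow_le_rpow ?_ hp0.le
    calc (↑‖∫ y, (Km (x - y) : ℂ) * fm y‖₊ : ℝ≥0∞)
        ≤ ∫⁻ y, ↑‖(Km (x - y) : ℂ) * fm y‖₊ := enorm_integral_le_lintegral_enorm _
      _ = T x := by
          refine lintegral_congr fun y => ?_
          rw [nnnorm_mul, ENNReal.coe_mul]
          congr 1
          have h1 : ‖((Km (x - y) : ℝ) : ℂ)‖₊ = ‖Km (x - y)‖₊ := by simp
          rw [h1, ← enorm_eq_nnnorm, Real.enorm_eq_ofReal (hKm0 _)]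
  calc eLpNorm (fun x => ∫ y, (Km (x - y) : ℂ) * fm y) p' volume
      ≤ (∫⁻ x, T x ^ p) ^ (1/p) := step0
    _ ≤ (X ^ (p-1) * Np ^ (2-p)) ^ (1/p) :=
        ENNReal.rpow_le_rpow step2 (one_div_nonneg.mpr hp0.le)
    _ = (X ^ ((1:ℝ)/2)) ^ (2*(p-1)/p) * (Np ^ (1/p)) ^ (2-p) := by
        rw [ENNReal.mul_rpow_of_nonneg _ _ (one_div_nonneg.mpr hp0.le), ← ENNReal.rpow_mul,
          ← ENNReal.rpow_mul, ← ENNReal.rpow_mul, ← ENNReal.rpow_mul,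
          (by ring : (p-1)*(1/p) = (1/2)*(2*(p-1)/p)),
          (by ring : (2-p)*(1/p) = (1/p)*(2-p))]
    _ = _ := by rw [conv2_norm, heLp_fm]
end
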